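/- arXiv:2101.02418 — 3 statements merged into one kernel-verified Lean document; each statement's English description precedes it below -/
import Mathlib

section
/- Let c be a fully invariant congruence on F such that c ⊆ σ_C2 and c ⊄ σ_E. Then there exist p, q ≥ 1 and r ≥ 2 such that c (xᵖ · y · x^q) (y · x^r). (In variety language: if a monoid variety V contains C2 but does not contain E = var{x² ≈ x³, x²y ≈ xyx, x²y² ≈ y²x²}, then V satisfies the identity xᵖyx^q ≈ yx^r for some p, q ≥ 1 and r ≥ 2.) -/
/-- The free monoid on countably many generators. -/
abbrev F : Type := FreeMonoid ℕ

/-- The fixed pairwise distinct generators. -/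
def x : F := FreeMonoid.of 0
def y : F := FreeMonoid.of 1
def z : F := FreeMonoid.of 2
def t : F := FreeMonoid.of 3

/-- A congruence on `F` is fully invariant if it is stable under every
monoid endomorphism of `F`. -/
def IsFullyInvariant (c : Con F) : Prop :=
  ∀ ξ : F →* F, ∀ u v : F, c u v → c (ξ u) (ξ v)

/-- The type of fully invariant congruences on `F`. -/
abbrev FICon : Type := {c : Con F // IsFullyInvariant c}

instance : InfSet FICon :=
  ⟨fun S => ⟨sInf (Subtype.val '' S), fun ξ u v h c hc => by
    obtain ⟨d, hd, rfl⟩ := hc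
    exact d.2 ξ u v (h d.1 ⟨d, hd, rfl⟩)⟩⟩

/-- The complete lattice of fully invariant congruences on `F`:
meets are intersections, joins are the smallest fully invariant congruences
containing the union, `⊥` is the equality relation and `⊤` is the all relation. -/
noncomputable instance : CompleteLattice FICon :=
  completeLatticeOfInf FICon (fun S =>
    ⟨fun c hc => fun u v h => h c.1 ⟨c, hc, rfl⟩,
     fun c hc => fun u v h d hd => by
        obtain ⟨e, he, rfl⟩ := hd
        exact hc he h⟩)

/-- `fic S` is the smallest fully invariant congruence on `F` containing the
set `S` of pairs of words. -/
noncomputable def fic (S : Set (F × F)) : FICon :=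
  sInf {c : FICon | ∀ p ∈ S, c.1 p.1 p.2}

noncomputable def sigmaC2 : FICon := fic {(x ^ 3, x ^ 2), (x * y, y * x)}

noncomputable def sigmaE : FICon :=
  fic {(x ^ 3, x ^ 2), (x ^ 2 * y, x * y * x), (x ^ 2 * y ^ 2, y ^ 2 * x ^ 2)}

namespace Aux
open List

abbrev W (l : List ℕ) : F := FreeMonoid.ofList l

lemma W_append (a b : List ℕ) : W (a ++ b) = W a * W b := rfl

lemma W_replicate (n : ℕ) (c : ℕ) : W (List.replicate n c) = (FreeMonoid.of c)^n := by
  induction n with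
  | zero => rfl
  | succ k ih => rw [List.replicate_succ, pow_succ']; exact congrArg (FreeMonoid.of c * ·) ih

def subst (f : ℕ → F) : F →* F := FreeMonoid.lift f

lemma dctx (d : Con F) {a b : F} (p q : F) (h : d a b) : d (p*a*q) (p*b*q) :=
  d.mul (d.mul (d.refl p) h) (d.refl q)

def Good (d : Con F) : Prop :=
  IsFullyInvariant d ∧ d (x^3) (x^2) ∧ d (x^2*y) (x*y*x) ∧ d (x^2*y^2) (y^2*x^2)

section rules
variable {d : Con F}

lemma rPow (hg : Good d) (u : F) : d (u*u*u) (u*u) := by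
  have := hg.1 (subst fun n => if n = 0 then u else 1) _ _ hg.2.1
  simpa [x, subst, pow_succ, mul_assoc] using this

lemma rMove (hg : Good d) (u v : F) : d (u*u*v) (u*v*u) := by
  have := hg.1 (subst fun n => if n = 0 then u else if n = 1 then v else 1) _ _ hg.2.2.1
  simpa [x, y, subst, pow_succ, mul_assoc] using this

lemma rSwap (hg : Good d) (u v : F) : d (u*u*(v*v)) (v*v*(u*u)) := by
  have := hg.1 (subst fun n => if n = 0 then u else if n = 1 then v else 1) _ _ hg.2.2.2
  simpa [x, y, subst, pow_succ, mul_assoc] using this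

lemma dpow_succ (hg : Good d) (u : F) (n : ℕ) (h : 2 ≤ n) : d (u^(n+1)) (u^n) := by
  obtain ⟨m, rfl⟩ : ∃ m, n = m + 2 := ⟨n-2, by omega⟩
  have h2 : d (u^m * (u*u*u)) (u^m * (u*u)) := d.mul (d.refl _) (rPow hg u)
  have e1 : u^(m+2+1) = u^m * (u*u*u) := by simp [pow_succ, mul_assoc]
  have e2 : u^(m+2) = u^m * (u*u) := by simp [pow_succ, mul_assoc]
  rw [e1, e2]; exact h2

lemma dpow_cap (hg : Good d) (u : F) : ∀ n : ℕ, 1 ≤ n → d (u^n) (u^(min n 2)) := by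
  intro n
  induction n using Nat.strong_induction_on with
  | _ n ih =>
    intro hn
    by_cases h2 : n ≤ 2
    · rw [min_eq_left h2]; exact d.refl _
    · obtain ⟨m, rfl⟩ : ∃ m, n = m + 1 := ⟨n-1, by omega⟩
      have step := dpow_succ hg u m (by omega)
      have rest := ih m (by omega) (by omega)
      have : min (m+1) 2 = min m 2 := by omega
      rw [this]
      exact d.trans step rest

end rules


def ddp : List ℕ → List ℕ
  | [] => []
  | a :: l => a :: ddp (l.filter (· ≠ a))
termination_by l => l.length
decreasing_by simp; exact (List.length_filter_le _ _).trans (le_of_eq List.length_attach)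

theorem ddp_ind (motive : List ℕ → Prop) (case1 : motive [])
    (case2 : ∀ a l, motive (l.filter (· ≠ a)) → motive (a :: l)) : ∀ w, motive w := by
  intro w
  induction h : w.length using Nat.strong_induction_on generalizing w with
  | _ n ih =>
    cases w with
    | nil => exact case1
    | cons a l =>
      exact case2 a l (ih _ (by simp at h; have := List.length_filter_le (· ≠ a) l; omega) _ rfl)

lemma mem_ddp {a : ℕ} : ∀ w : List ℕ, a ∈ ddp w ↔ a ∈ w := by
  intro w
  induction w using ddp_ind with
  | case1 => simp [ddp]
  | case2 c l ih =>
    rw [ddp]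
    by_cases hac : a = c
    · subst hac; simp
    · simp only [List.mem_cons, ih, List.mem_filter, decide_eq_true_eq]
      constructor
      · rintro (h | ⟨h, _⟩) <;> simp [h, hac]
      · rintro (h | h)
        · exact absurd h hac
        · exact Or.inr ⟨h, by simpa using hac⟩

lemma ddp_nodup : ∀ w : List ℕ, (ddp w).Nodup := by
  intro w
  induction w using ddp_ind with
  | case1 => simp [ddp]
  | case2 c l ih =>
    rw [ddp]
    refine List.nodup_cons.mpr ⟨fun hc => ?_, ih⟩
    rw [mem_ddp] at hc
    simp at hc

lemma pair_sublist_cons_ne {a b c : ℕ} {L : List ℕ} (h : a ≠ c) :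
    [a,b] <+ c :: L ↔ [a,b] <+ L := by
  rw [List.sublist_cons_iff]
  constructor
  · rintro (h' | ⟨r, hr, hrL⟩)
    · exact h'
    · cases hr; exact absurd rfl h
  · exact Or.inl

lemma pair_sublist_cons_self {a b : ℕ} {L : List ℕ} :
    [a,b] <+ a :: L ↔ b ∈ L := by
  rw [List.sublist_cons_iff]
  constructor
  · rintro (h' | ⟨r, hr, hrL⟩)
    · exact (List.singleton_sublist.mp (List.Sublist.trans (by simp) h'))
    · cases hr
      exact List.singleton_sublist.mp hrL
  · intro hb
    exact Or.inr ⟨[b], rfl, List.singleton_sublist.mpr hb⟩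

lemma pair_sublist_filter {a t c : ℕ} {L : List ℕ} (ha : a ≠ c) (ht : t ≠ c) :
    [a,t] <+ L.filter (· ≠ c) ↔ [a,t] <+ L := by
  constructor
  · exact fun h => h.trans List.filter_sublist
  · intro h
    have := h.filter (· ≠ c)
    simpa [ha, ht] using this

lemma ddp_pair {a t : ℕ} : ∀ w : List ℕ, w.count t = 1 → a ∈ w → a ≠ t →
    ([a,t] <+ ddp w ↔ [a,t] <+ w) := by
  intro w
  induction w using ddp_ind with
  | case1 => simp
  | case2 c l ih =>
    intro hcnt hmem hat
    rw [ddp]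
    by_cases hca : c = a
    · subst hca
      rw [pair_sublist_cons_self, pair_sublist_cons_self, mem_ddp, List.mem_filter]
      simp only [decide_eq_true_eq]
      constructor
      · rintro ⟨h, _⟩; exact h
      · intro h; exact ⟨h, fun hc => hat (by rw [hc])⟩
    · by_cases hct : c = t
      · subst hct
        have hcl : c ∉ l := by
          rw [List.count_cons_self] at hcnt
          exact List.count_eq_zero.mp (by omega)
        constructor
        · intro h
          rw [List.sublist_cons_iff] at h
          rcases h with h' | ⟨r, hr, hrL⟩
          · have hc : c ∈ ddp (l.filter (· ≠ c)) :=
              List.singleton_sublist.mp (List.Sublist.trans (by simp) h')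
            rw [mem_ddp, List.mem_filter] at hc
            simp at hc
          · cases hr; exact absurd rfl (Ne.symm hat)
        · intro h
          rw [List.sublist_cons_iff] at h
          rcases h with h' | ⟨r, hr, hrL⟩
          · exact absurd (List.singleton_sublist.mp (List.Sublist.trans (by simp) h')) hcl
          · cases hr; exact absurd rfl (Ne.symm hat)
      · have hac : a ≠ c := fun h => hca h.symm
        rw [pair_sublist_cons_ne hac, pair_sublist_cons_ne hac]
        have htc : t ≠ c := fun h => hct h.symm
        have hcnt' : (l.filter (· ≠ c)).count t = 1 := by
          rw [List.count_filter (by simpa using htc)]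
          rw [List.count_cons] at hcnt
          simpa [hct] using hcnt
        have hmem' : a ∈ l.filter (· ≠ c) := by
          rw [List.mem_filter]
          rcases List.mem_cons.mp hmem with h | h
          · exact absurd h hac
          · exact ⟨h, by simpa using hac⟩
        rw [ih hcnt' hmem' hat, pair_sublist_filter hac htc]

lemma ddp_filter_eq {p : ℕ → Bool} : ∀ w : List ℕ, (∀ x, p x = true → w.count x ≤ 1) →
    (ddp w).filter p = w.filter p := by
  intro w
  induction w using ddp_ind with
  | case1 => simp [ddp]
  | case2 c l ih =>
    intro hp
    rw [ddp]
    have hcount : ∀ b, p b = true → (l.filter (· ≠ c)).count b ≤ 1 := by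
      intro b hb
      calc (l.filter (· ≠ c)).count b ≤ l.count b := (List.filter_sublist (l := l)).count_le b
        _ ≤ (c :: l).count b := by rw [List.count_cons]; omega
        _ ≤ 1 := hp b hb
    by_cases hpc : p c = true
    · have hcl : c ∉ l := by
        have := hp c hpc
        rw [List.count_cons_self] at this
        exact List.count_eq_zero.mp (by omega)
      have hfl : l.filter (· ≠ c) = l := by
        apply List.filter_eq_self.mpr
        intro b hb
        simp only [decide_eq_true_eq]
        exact fun h => hcl (h ▸ hb)
      rw [List.filter_cons_of_pos hpc, List.filter_cons_of_pos hpc, ih hcount, hfl]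
    · rw [List.filter_cons_of_neg hpc, List.filter_cons_of_neg hpc, ih hcount,
        List.filter_filter]
      apply List.filter_congr
      intro b hb
      by_cases h : p b = true
      · have hbc : b ≠ c := fun hh => hpc (hh ▸ h)
        simp [h, hbc]
      · simp [h]


def flatm (m : ℕ → ℕ) (L : List ℕ) : List ℕ := L.flatMap fun a => List.replicate (m a) a

lemma flatm_cons (m : ℕ → ℕ) (c : ℕ) (L : List ℕ) :
    flatm m (c :: L) = List.replicate (m c) c ++ flatm m L := rfl

lemma flatm_append (m : ℕ → ℕ) (A B : List ℕ) :
    flatm m (A ++ B) = flatm m A ++ flatm m B := by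
  simp [flatm]

lemma first_occ {c : ℕ} : ∀ {B : List ℕ}, c ∈ B → ∃ B1 B2, B = B1 ++ c :: B2 ∧ c ∉ B1 := by
  intro B
  induction B with
  | nil => simp
  | cons b B ih =>
    intro hc
    by_cases hbc : b = c
    · exact ⟨[], B, by simp [hbc], by simp⟩
    · rcases List.mem_cons.mp hc with h | h
      · exact absurd h.symm hbc
      · obtain ⟨B1, B2, hB, hc1⟩ := ih h
        refine ⟨b :: B1, B2, by simp [hB], ?_⟩
        intro hmem
        rcases List.mem_cons.mp hmem with h' | h'
        · exact hbc h'.symm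
        · exact hc1 h'

section words
variable {d : Con F}

lemma dW_ctx {m1 m2 : List ℕ} (p q : List ℕ) (h : d (W m1) (W m2)) :
    d (W (p ++ m1 ++ q)) (W (p ++ m2 ++ q)) := by
  simpa [W_append, mul_assoc] using dctx d (W p) (W q) h

lemma dW_left {m1 m2 : List ℕ} (p : List ℕ) (h : d (W m1) (W m2)) :
    d (W (p ++ m1)) (W (p ++ m2)) :=
  d.mul (d.refl (W p)) h

/-- Pull all occurrences of `c` in `B` to the front of `c :: B`. -/
lemma L_pull (hg : Good d) (c : ℕ) : ∀ n, ∀ B : List ℕ, B.count c = n →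
    d (W (c :: B)) (W (c :: (List.replicate n c ++ B.filter (· ≠ c)))) := by
  intro n
  induction n using Nat.strong_induction_on with
  | _ n ih =>
    intro B hB
    match n, hB with
    | 0, hB =>
      have : B.filter (· ≠ c) = B := by
        apply List.filter_eq_self.mpr
        intro b hb
        simp only [decide_eq_true_eq]
        intro hbc
        exact absurd (List.count_pos_iff.mpr (hbc ▸ hb)) (by omega)
      rw [this]
      simp only [List.replicate_zero, List.nil_append]
      exact d.refl _
    | (k+1), hB =>
      have hcB : c ∈ B := List.count_pos_iff.mp (by omega)
      obtain ⟨B1, B2, rfl, hc1⟩ := first_occ hcB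
      -- step 1 : c :: B1 ++ c :: B2  ≈  c :: c :: B1 ++ B2
      have step1 : d (W (([c] ++ B1 ++ [c]) ++ B2)) (W (([c] ++ [c] ++ B1) ++ B2)) := by
        have := d.mul (d.symm (rMove hg (W [c]) (W B1))) (d.refl (W B2))
        simpa [W_append, mul_assoc] using this
      -- step 2 : recursion on B1 ++ B2
      have hcnt : (B1 ++ B2).count c = k := by
        have h0 : B1.count c = 0 := List.count_eq_zero.mpr hc1
        have := hB
        simp only [List.count_append, List.count_cons_self, h0] at this ⊢
        omega
      have step2 := ih k (by omega) (B1 ++ B2) hcnt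
      have step2' := dW_left [c] step2
      -- filters agree
      have hfil : (B1 ++ B2).filter (· ≠ c) = (B1 ++ c :: B2).filter (· ≠ c) := by
        simp [List.filter_append]
      have goal2 : d (W ([c] ++ ([c] ++ (B1 ++ B2))))
          (W (c :: (List.replicate (k+1) c ++ (B1 ++ c :: B2).filter (· ≠ c)))) := by
        rw [← hfil]
        simpa [List.replicate_succ, List.append_assoc] using step2'
      refine d.trans ?_ goal2
      simpa [List.append_assoc] using step1


/-- Gather: every word is equivalent to its canonical "blocks at first occurrences" form. -/
lemma G (hg : Good d) : ∀ w : List ℕ, ∀ m : ℕ → ℕ, (∀ a, a ∈ w → m a = min (w.count a) 2) →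
    d (W w) (W (flatm m (ddp w))) := by
  intro w
  induction w using ddp_ind with
  | case1 => intro m _; rw [ddp]; exact d.refl _
  | case2 c l ih =>
    intro m hm
    have hcw : (c :: l).count c = l.count c + 1 := List.count_cons_self (a := c) (l := l)
    -- step 1: pull all c's to the front
    have step1 := L_pull hg c (l.count c) l rfl
    -- step 2: cap the exponent
    have hmc : m c = min (l.count c + 1) 2 := by rw [hm c (by simp), hcw]
    have cap : d (W (List.replicate (l.count c + 1) c)) (W (List.replicate (m c) c)) := by
      rw [W_replicate, W_replicate, hmc]
      exact dpow_cap hg _ _ (by omega)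
    have step2 : d (W (List.replicate (l.count c + 1) c ++ l.filter (· ≠ c)))
        (W (List.replicate (m c) c ++ l.filter (· ≠ c))) :=
      d.mul cap (d.refl (W (l.filter (· ≠ c))))
    -- step 3: recursion on the filtered tail
    have hm' : ∀ a, a ∈ l.filter (· ≠ c) → m a = min ((l.filter (· ≠ c)).count a) 2 := by
      intro a ha
      rw [List.mem_filter, decide_eq_true_eq] at ha
      have hcount : (l.filter (· ≠ c)).count a = (c :: l).count a := by
        rw [List.count_filter (by simpa using ha.2), List.count_cons]
        simp [Ne.symm ha.2]
      rw [hcount]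
      exact hm a (by simp [ha.1])
    have step3 := ih m hm'
    have step3' : d (W (List.replicate (m c) c ++ l.filter (· ≠ c)))
        (W (List.replicate (m c) c ++ flatm m (ddp (l.filter (· ≠ c))))) :=
      dW_left _ step3
    -- assemble
    have e : W (c :: l) = W ([c] ++ l) := rfl
    have e2 : c :: (List.replicate (l.count c) c ++ l.filter (· ≠ c))
        = List.replicate (l.count c + 1) c ++ l.filter (· ≠ c) := by
      simp [List.replicate_succ]
    rw [ddp, flatm_cons]
    refine d.trans ?_ step3'
    refine d.trans ?_ step2
    rw [← e2]
    exact step1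

/-- Bubble a square block past a list of square blocks. -/
lemma BL (hg : Good d) (m : ℕ → ℕ) (c : ℕ) (hc : m c = 2) :
    ∀ X Y : List ℕ, (∀ b ∈ X, m b = 2) →
    d (W (flatm m (X ++ c :: Y))) (W (flatm m (c :: (X ++ Y)))) := by
  intro X
  induction X with
  | nil => intro Y _; exact d.refl _
  | cons b X' ih =>
    intro Y hX
    have hb : m b = 2 := hX b (by simp)
    have ih' := ih Y (fun b hb => hX b (by simp [hb]))
    have step1 : d (W (flatm m ((b :: X') ++ c :: Y))) (W (List.replicate (m b) b ++ flatm m (c :: (X' ++ Y)))) := by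
      rw [List.cons_append, flatm_cons]
      exact dW_left _ ih'
    have step2 : d (W (List.replicate (m b) b ++ flatm m (c :: (X' ++ Y))))
        (W (flatm m (c :: ((b :: X') ++ Y)))) := by
      rw [flatm_cons, List.cons_append, flatm_cons, flatm_cons, hb, hc]
      have := d.mul (rSwap hg (FreeMonoid.of b) (FreeMonoid.of c)) (d.refl (W (flatm m (X' ++ Y))))
      have e : ∀ (p q : ℕ) (R : List ℕ), (FreeMonoid.of p * FreeMonoid.of p * (FreeMonoid.of q * FreeMonoid.of q)) * W (flatm m R)
          = W (List.replicate 2 p ++ (List.replicate 2 q ++ flatm m R)) := by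
        intro p q R
        simp [W_append, List.replicate, W_replicate, pow_succ, mul_assoc]
      rw [e, e] at this
      simpa [List.cons_append, flatm_cons, hb] using this
    exact d.trans step1 step2


lemma not_pair_left {a s : ℕ} {L : List ℕ} (h : a ∉ L) : ¬ ([a,s] <+ L) :=
  fun hs => h (hs.subset (by simp))

lemma not_pair_right {a s : ℕ} {L : List ℕ} (h : s ∉ L) : ¬ ([a,s] <+ L) :=
  fun hs => h (hs.subset (by simp))

lemma sub_cons_of_ne {l : List ℕ} {c : ℕ} {Y : List ℕ} (h : l <+ c :: Y) (hc : c ∉ l) :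
    l <+ Y := by
  rcases List.sublist_cons_iff.mp h with h' | ⟨r, rfl, hr⟩
  · exact h'
  · exact absurd (by simp) hc

lemma pair_sublist_middle {a s c : ℕ} (hac : a ≠ c) (hsc : s ≠ c) (X Y : List ℕ) :
    ([a,s] <+ X ++ c :: Y) ↔ [a,s] <+ X ++ Y := by
  constructor
  · intro h
    rw [List.sublist_append_iff] at h
    obtain ⟨l1, l2, heq, h1, h2⟩ := h
    have hcl2 : c ∉ l2 := by
      intro hc
      have : c ∈ [a,s] := heq ▸ List.mem_append_right l1 hc
      simp only [List.mem_cons, List.mem_singleton] at this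
      rcases this with h | h
      · exact hac h.symm
      · rcases h with h | h
        · exact hsc h.symm
        · simp at h
    rw [List.sublist_append_iff]
    exact ⟨l1, l2, heq, h1, sub_cons_of_ne h2 hcl2⟩
  · intro h
    exact h.trans (List.Sublist.append_left (List.sublist_cons_self c Y) X)

/-- Sorting lemma: two block-decompositions with the same letters, same sequence of
`P`-letters, and the same relative order of `P`-letters vs non-`P`-letters are equivalent. -/
lemma SL (hg : Good d) (m : ℕ → ℕ) (P : ℕ → Bool) :
    ∀ L1 L2 : List ℕ, L1.Nodup → L2.Nodup → (∀ z, z ∈ L1 ↔ z ∈ L2) →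
    L1.filter P = L2.filter P →
    (∀ s a : ℕ, P s = true → P a = false → ([a,s] <+ L1 ↔ [a,s] <+ L2)) →
    (∀ n, n ∈ L1 → P n = false → m n = 2) →
    d (W (flatm m L1)) (W (flatm m L2)) := by
  intro L1
  induction L1 with
  | nil =>
    intro L2 _ _ hmem _ _ _
    have : L2 = [] := List.eq_nil_iff_forall_not_mem.mpr
      (fun a ha => List.not_mem_nil ((hmem a).mpr ha))
    subst this
    exact d.refl _
  | cons c l1 ih =>
    intro L2 hnd1 hnd2 hmem hfil hord hm
    have hcl1 : c ∉ l1 := (List.nodup_cons.mp hnd1).1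
    have hnd1' : l1.Nodup := (List.nodup_cons.mp hnd1).2
    have hc2 : c ∈ L2 := (hmem c).mp (by simp)
    obtain ⟨X, Y, rfl⟩ := List.append_of_mem hc2
    have hdisj := List.disjoint_of_nodup_append hnd2
    have hcX : c ∉ X := fun h => hdisj h (by simp)
    have hcY : c ∉ Y := by
      have := (List.Nodup.of_append_right hnd2)
      exact (List.nodup_cons.mp this).1
    have hXP : ∀ b ∈ X, P b = false := by
      intro b hbX
      by_contra hPb
      rw [Bool.not_eq_false] at hPb
      have hbc : b ≠ c := fun h => hcX (h ▸ hbX)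
      rcases (Bool.eq_false_or_eq_true (P c)).symm with hPc | hPc
      · -- P c = false : use the order hypothesis with s := b, a := c
        have h1 : [c,b] <+ c :: l1 := by
          rw [pair_sublist_cons_self]
          have : b ∈ c :: l1 := (hmem b).mpr (by simp [hbX])
          rcases List.mem_cons.mp this with h | h
          · exact absurd h hbc
          · exact h
        have h2 : [c,b] <+ X ++ c :: Y := (hord b c hPb hPc).mp h1
        rw [List.sublist_append_iff] at h2
        obtain ⟨p1, p2, heq, hs1, hs2⟩ := h2
        cases p1 with
        | nil =>
          simp only [List.nil_append] at heq
          subst heq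
          have hbY : b ∈ Y := by
            rcases List.sublist_cons_iff.mp hs2 with h' | ⟨r, hr, hrY⟩
            · exact absurd (h'.subset (by simp)) hcY
            · cases hr
              exact List.singleton_sublist.mp hrY
          exact hdisj hbX (by simp [hbY])
        | cons c' p1' =>
          have : c' = c := by
            have := congrArg (fun l => l.head?) heq
            simp at this
            exact this.symm
          subst this
          exact hcX (hs1.subset (by simp))
      · -- P c = true : contradiction via the filter equality
        have hfX : b ∈ X.filter P := List.mem_filter.mpr ⟨hbX, hPb⟩
        have hne : X.filter P ≠ [] := List.ne_nil_of_mem hfX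
        rw [List.filter_append, List.filter_cons_of_pos hPc, List.filter_cons_of_pos hPc] at hfil
        obtain ⟨f0, ft, hft⟩ := List.exists_cons_of_ne_nil hne
        rw [hft, List.cons_append] at hfil
        have hcf0 : c = f0 := by injection hfil with h1 _
        have : f0 ∈ X := by
          have : f0 ∈ X.filter P := by rw [hft]; simp
          exact (List.mem_filter.mp this).1
        exact hcX (hcf0 ▸ this)
    have hXnil : P c = true → X = [] := by
      intro hPc
      refine List.eq_nil_iff_forall_not_mem.mpr (fun b hbX => ?_)
      have hPb : P b = false := hXP b hbX
      have hbc : b ≠ c := fun h => by rw [h, hPc] at hPb; cases hPb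
      have h2 : [b,c] <+ X ++ c :: Y := by
        rw [List.sublist_append_iff]
        exact ⟨[b], [c], rfl, List.singleton_sublist.mpr hbX, by simp⟩
      have h1 : [b,c] <+ c :: l1 := (hord c b hPc hPb).mpr h2
      rcases List.sublist_cons_iff.mp h1 with h' | ⟨r, hr, hrY⟩
      · exact hcl1 (h'.subset (by simp))
      · injection hr with h hh
        exact hbc h
    -- the bubble move
    have hmc2 : P c = false → m c = 2 := hm c (by simp)
    have hBL : d (W (flatm m (X ++ c :: Y))) (W (flatm m (c :: (X ++ Y)))) := by
      rcases (Bool.eq_false_or_eq_true (P c)).symm with hPc | hPc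
      · exact BL hg m c (hmc2 hPc) X Y
          (fun b hb => hm b ((hmem b).mpr (by simp [hb])) (hXP b hb))
      · rw [hXnil hPc]; exact d.refl _
    -- invariant transfer to the tails
    have hnd' : (X ++ Y).Nodup := List.Nodup.sublist
      ((List.sublist_cons_self c Y).append_left X) hnd2
    have hmem' : ∀ z, z ∈ l1 ↔ z ∈ X ++ Y := by
      intro z
      constructor
      · intro hz
        have hzc : z ≠ c := fun h => hcl1 (h ▸ hz)
        have : z ∈ X ++ c :: Y := (hmem z).mp (by simp [hz])
        rcases List.mem_append.mp this with h | h
        · exact List.mem_append.mpr (Or.inl h)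
        · rcases List.mem_cons.mp h with h' | h'
          · exact absurd h' hzc
          · exact List.mem_append.mpr (Or.inr h')
      · intro hz
        have hzc : z ≠ c := by
          rcases List.mem_append.mp hz with h | h
          · exact fun hh => hcX (hh ▸ h)
          · exact fun hh => hcY (hh ▸ h)
        have : z ∈ X ++ c :: Y := by
          rcases List.mem_append.mp hz with h | h
          · exact List.mem_append.mpr (Or.inl h)
          · exact List.mem_append.mpr (Or.inr (by simp [h]))
        have := (hmem z).mpr this
        rcases List.mem_cons.mp this with h' | h'
        · exact absurd h' hzc
        · exact h'
    have hfX0 : X.filter P = [] := List.filter_eq_nil_iff.mpr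
      (fun b hb => by simp [hXP b hb])
    have hfil' : l1.filter P = (X ++ Y).filter P := by
      rw [List.filter_append, hfX0, List.nil_append]
      rw [List.filter_append, hfX0, List.nil_append] at hfil
      rcases (Bool.eq_false_or_eq_true (P c)).symm with hPc | hPc
      · rwa [List.filter_cons_of_neg (by simp [hPc]), List.filter_cons_of_neg (by simp [hPc])] at hfil
      · rw [List.filter_cons_of_pos hPc, List.filter_cons_of_pos hPc] at hfil
        injection hfil
    have hord' : ∀ s a : ℕ, P s = true → P a = false → ([a,s] <+ l1 ↔ [a,s] <+ X ++ Y) := by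
      intro s a hPs hPa
      by_cases hsc : s = c
      · subst hsc
        constructor
        · intro h; exact absurd h (not_pair_right hcl1)
        · intro h; exact absurd h (not_pair_right (by simp [hcX, hcY]))
      · by_cases hac : a = c
        · subst hac
          constructor
          · intro h; exact absurd h (not_pair_left hcl1)
          · intro h; exact absurd h (not_pair_left (by simp [hcX, hcY]))
        · rw [← pair_sublist_middle hac hsc X Y, ← hord s a hPs hPa,
            pair_sublist_cons_ne hac]
    have hm' : ∀ n, n ∈ l1 → P n = false → m n = 2 := fun n hn => hm n (by simp [hn])
    have hrec := ih (X ++ Y) hnd1' hnd' hmem' hfil' hord' hm'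
    have main : d (W (flatm m (c :: l1))) (W (flatm m (c :: (X ++ Y)))) := by
      rw [flatm_cons, flatm_cons]
      exact dW_left _ hrec
    exact d.trans main (d.symm hBL)


lemma swap_pair : ∀ L1 L2 : List ℕ, L1.Nodup → L2.Nodup → (∀ z, z ∈ L1 ↔ z ∈ L2) →
    L1 ≠ L2 → ∃ s t : ℕ, s ≠ t ∧ [s,t] <+ L1 ∧ [t,s] <+ L2 := by
  intro L1
  induction L1 with
  | nil =>
    intro L2 _ _ hmem hne
    exact absurd (List.eq_nil_iff_forall_not_mem.mpr
      (fun a ha => List.not_mem_nil ((hmem a).mpr ha))).symm hne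
  | cons c l1 ih =>
    intro L2 hnd1 hnd2 hmem hne
    match L2, hne with
    | [], hne => exact absurd ((hmem c).mp (by simp)) List.not_mem_nil
    | b :: l2, hne =>
      by_cases hcb : c = b
      · subst hcb
        have hcl1 : c ∉ l1 := (List.nodup_cons.mp hnd1).1
        have hcl2 : c ∉ l2 := (List.nodup_cons.mp hnd2).1
        have hmem' : ∀ z, z ∈ l1 ↔ z ∈ l2 := by
          intro z
          constructor
          · intro hz
            have hzc : z ≠ c := fun h => hcl1 (h ▸ hz)
            rcases List.mem_cons.mp ((hmem z).mp (by simp [hz])) with h | h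
            · exact absurd h hzc
            · exact h
          · intro hz
            have hzc : z ≠ c := fun h => hcl2 (h ▸ hz)
            rcases List.mem_cons.mp ((hmem z).mpr (by simp [hz])) with h | h
            · exact absurd h hzc
            · exact h
        have hne' : l1 ≠ l2 := fun h => hne (by rw [h])
        obtain ⟨s, t, hst, h1, h2⟩ := ih l2 (List.nodup_cons.mp hnd1).2
          (List.nodup_cons.mp hnd2).2 hmem' hne'
        exact ⟨s, t, hst, h1.cons c, h2.cons c⟩
      · refine ⟨c, b, hcb, ?_, ?_⟩
        · rw [pair_sublist_cons_self]
          have : b ∈ c :: l1 := (hmem b).mpr (by simp)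
          rcases List.mem_cons.mp this with h | h
          · exact absurd h.symm hcb
          · exact h
        · rw [pair_sublist_cons_self]
          have : c ∈ b :: l2 := (hmem c).mp (by simp)
          rcases List.mem_cons.mp this with h | h
          · exact absurd h hcb
          · exact h

/-! ### The capped-count congruence, a model of `σ_C2` -/

def capEq (u v : F) : Prop :=
  ∀ i : ℕ, min ((FreeMonoid.toList u).count i) 2 = min ((FreeMonoid.toList v).count i) 2

def cCap : Con F where
  r := capEq
  iseqv := ⟨fun _ _ => rfl, fun h i => (h i).symm, fun h1 h2 i => (h1 i).trans (h2 i)⟩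
  mul' := by
    intro a b p q h1 h2 i
    have e : ∀ s t : F, (FreeMonoid.toList (s * t)).count i
        = (FreeMonoid.toList s).count i + (FreeMonoid.toList t).count i := by
      intro s t; rw [FreeMonoid.toList_mul, List.count_append]
    rw [e, e]
    have := h1 i; have := h2 i
    omega

lemma hom_apply (ξ : F →* F) (w : List ℕ) :
    ξ (W w) = W (w.flatMap fun a => FreeMonoid.toList (ξ (FreeMonoid.of a))) := by
  induction w with
  | nil => exact map_one ξ
  | cons a w ih =>
    have e : W (a :: w) = FreeMonoid.of a * W w := rfl
    rw [List.flatMap_cons, e, map_mul, ih, W_append]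
    congr 1

lemma count_flatMap (i : ℕ) (g : ℕ → List ℕ) : ∀ w : List ℕ,
    (w.flatMap g).count i = (w.map fun a => (g a).count i).sum := by
  intro w
  induction w with
  | nil => rfl
  | cons a w ih => rw [List.flatMap_cons, List.count_append, List.map_cons, List.sum_cons, ih]

lemma mem_le_sum {f : ℕ → ℕ} {a : ℕ} : ∀ {w : List ℕ}, a ∈ w → f a ≤ (w.map f).sum := by
  intro w
  induction w with
  | nil => simp
  | cons b w ih =>
    intro ha
    rcases List.mem_cons.mp ha with h | h
    · subst h; simp
    · have := ih h
      simp only [List.map_cons, List.sum_cons]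
      omega

lemma count_mul_le_sum (f : ℕ → ℕ) (a : ℕ) : ∀ w : List ℕ,
    w.count a * f a ≤ (w.map f).sum := by
  intro w
  induction w with
  | nil => simp
  | cons b w ih =>
    simp only [List.map_cons, List.sum_cons]
    by_cases h : a = b
    · subst h
      rw [List.count_cons_self, Nat.succ_mul]
      omega
    · rw [List.count_cons_of_ne (Ne.symm h)]
      omega

lemma pair_le_sum {f : ℕ → ℕ} {a b : ℕ} (hab : a ≠ b) : ∀ {w : List ℕ}, a ∈ w → b ∈ w →
    f a + f b ≤ (w.map f).sum := by
  intro w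
  induction w with
  | nil => simp
  | cons c w ih =>
    intro ha hb
    simp only [List.map_cons, List.sum_cons]
    by_cases hca : c = a
    · subst hca
      have hbw : b ∈ w := by
        rcases List.mem_cons.mp hb with h | h
        · exact absurd h.symm hab
        · exact h
      have := mem_le_sum (f := f) hbw
      omega
    · by_cases hcb : c = b
      · subst hcb
        have haw : a ∈ w := by
          rcases List.mem_cons.mp ha with h | h
          · exact absurd h hab
          · exact h
        have := mem_le_sum (f := f) haw
        omega
      · have haw : a ∈ w := by
          rcases List.mem_cons.mp ha with h | h
          · exact absurd h.symm hca
          · exact h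
        have hbw : b ∈ w := by
          rcases List.mem_cons.mp hb with h | h
          · exact absurd h.symm hcb
          · exact h
        have := ih haw hbw
        omega

lemma sum_pos_exists {f : ℕ → ℕ} : ∀ {w : List ℕ}, 1 ≤ (w.map f).sum → ∃ b ∈ w, 1 ≤ f b := by
  intro w
  induction w with
  | nil => simp
  | cons a w ih =>
    intro h
    simp only [List.map_cons, List.sum_cons] at h
    by_cases hfa : 1 ≤ f a
    · exact ⟨a, by simp, hfa⟩
    · have : 1 ≤ (w.map f).sum := by omega
      obtain ⟨b, hb, hfb⟩ := ih this
      exact ⟨b, by simp [hb], hfb⟩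

lemma sum_ge_two_iff (f : ℕ → ℕ) : ∀ w : List ℕ, 2 ≤ (w.map f).sum ↔
    (∃ a ∈ w, 2 ≤ f a) ∨ (∃ a ∈ w, 1 ≤ f a ∧ 2 ≤ w.count a) ∨
    (∃ a ∈ w, ∃ b ∈ w, a ≠ b ∧ 1 ≤ f a ∧ 1 ≤ f b) := by
  intro w
  constructor
  · induction w with
    | nil => simp
    | cons a w ih =>
      intro h
      simp only [List.map_cons, List.sum_cons] at h
      by_cases h2 : 2 ≤ f a
      · exact Or.inl ⟨a, by simp, h2⟩
      · by_cases h1 : 1 ≤ f a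
        · have hs : 1 ≤ (w.map f).sum := by omega
          obtain ⟨b, hbw, hfb⟩ := sum_pos_exists hs
          by_cases hba : b = a
          · subst hba
            refine Or.inr (Or.inl ⟨b, by simp, hfb, ?_⟩)
            rw [List.count_cons_self]
            have : 1 ≤ w.count b := List.count_pos_iff.mpr hbw
            omega
          · exact Or.inr (Or.inr ⟨a, by simp, b, by simp [hbw], fun h => hba h.symm, h1, hfb⟩)
        · have hs : 2 ≤ (w.map f).sum := by omega
          rcases ih hs with ⟨b, hb, hfb⟩ | ⟨b, hb, hfb, hcb⟩ | ⟨b, hb, b', hb', hne, hfb, hfb'⟩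
          · exact Or.inl ⟨b, by simp [hb], hfb⟩
          · refine Or.inr (Or.inl ⟨b, by simp [hb], hfb, ?_⟩)
            have := (List.sublist_cons_self a w).count_le b
            omega
          · exact Or.inr (Or.inr ⟨b, by simp [hb], b', by simp [hb'], hne, hfb, hfb'⟩)
  · rintro (⟨a, ha, hfa⟩ | ⟨a, ha, hfa, hca⟩ | ⟨a, ha, b, hb, hab, hfa, hfb⟩)
    · have := mem_le_sum (f := f) ha
      omega
    · have k1 := count_mul_le_sum f a w
      have k2 : 2 * 1 ≤ w.count a * f a := Nat.mul_le_mul hca hfa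
      omega
    · have := pair_le_sum (f := f) hab ha hb
      omega

lemma sum_eq_zero_iff' (f : ℕ → ℕ) (w : List ℕ) :
    (w.map f).sum = 0 ↔ ∀ a ∈ w, f a = 0 := by
  rw [List.sum_eq_zero_iff]
  constructor
  · intro h a ha
    exact h (f a) (List.mem_map_of_mem ha)
  · intro h i hi
    obtain ⟨a, ha, rfl⟩ := List.mem_map.mp hi
    exact h a ha

lemma capsum {lu lv : List ℕ} (f : ℕ → ℕ)
    (h : ∀ i, min (lu.count i) 2 = min (lv.count i) 2) :
    min ((lu.map f).sum) 2 = min ((lv.map f).sum) 2 := by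
  have hmem : ∀ i : ℕ, i ∈ lu ↔ i ∈ lv := by
    intro i
    rw [← List.count_pos_iff, ← List.count_pos_iff]
    have := h i; omega
  have htwo : ∀ i : ℕ, 2 ≤ lu.count i ↔ 2 ≤ lv.count i := by
    intro i; have := h i; omega
  have h2 : 2 ≤ (lu.map f).sum ↔ 2 ≤ (lv.map f).sum := by
    rw [sum_ge_two_iff, sum_ge_two_iff]
    simp only [hmem, htwo]
  have h0 : (lu.map f).sum = 0 ↔ (lv.map f).sum = 0 := by
    rw [sum_eq_zero_iff', sum_eq_zero_iff']
    simp only [hmem]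
  omega

lemma cCap_fi : IsFullyInvariant cCap := by
  intro ξ u v h i
  have key : ∀ w : F, (FreeMonoid.toList (ξ w)).count i
      = ((FreeMonoid.toList w).map fun a => (FreeMonoid.toList (ξ (FreeMonoid.of a))).count i).sum := by
    intro w
    conv_lhs => rw [show w = W (FreeMonoid.toList w) from rfl, hom_apply]
    rw [show ∀ l : List ℕ, FreeMonoid.toList (W l) = l from fun _ => rfl]
    exact count_flatMap i _ _
  rw [key, key]
  exact capsum _ h


/-! ### Substitutions into two-letter words -/

def gg (a s : ℕ) (n : ℕ) : List ℕ := if n = a then [0] else if n = s then [1] else []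

def zeta (a s : ℕ) : F →* F := subst (fun n => if n = a then x else if n = s then y else 1)

lemma zeta_apply (a s : ℕ) (w : List ℕ) : zeta a s (W w) = W (w.flatMap (gg a s)) := by
  rw [hom_apply]
  have e : (fun n => FreeMonoid.toList (zeta a s (FreeMonoid.of n))) = gg a s := by
    funext n
    simp only [zeta, subst, gg, FreeMonoid.lift_eval_of]
    split_ifs <;> rfl
  rw [e]

lemma count_one_split {s : ℕ} {w : List ℕ} (h : w.count s = 1) :
    ∃ A B, w = A ++ s :: B ∧ s ∉ A ∧ s ∉ B := by
  have hs : s ∈ w := List.count_pos_iff.mp (by omega)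
  obtain ⟨A, B, rfl, hA⟩ := first_occ hs
  refine ⟨A, B, rfl, hA, ?_⟩
  have h0 : A.count s = 0 := List.count_eq_zero.mpr hA
  rw [List.count_append, List.count_cons_self, h0] at h
  exact List.count_eq_zero.mp (by omega)

lemma flatMap_gg_nil {a s : ℕ} {A : List ℕ} (ha : a ∉ A) (hs : s ∉ A) :
    A.flatMap (gg a s) = [] := by
  induction A with
  | nil => rfl
  | cons b A' ih =>
    have hba : b ≠ a := fun h => ha (by simp [h])
    have hbs : b ≠ s := fun h => hs (by simp [h])
    rw [List.flatMap_cons, ih (fun h => ha (by simp [h])) (fun h => hs (by simp [h]))]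
    simp [gg, hba, hbs]

lemma flatMap_gg_xs {a s : ℕ} : ∀ {B : List ℕ}, s ∉ B →
    B.flatMap (gg a s) = List.replicate (B.count a) 0 := by
  intro B
  induction B with
  | nil => simp
  | cons b B' ih =>
    intro hs
    have hbs : b ≠ s := fun h => hs (by simp [h])
    rw [List.flatMap_cons, ih (fun h => hs (by simp [h]))]
    by_cases hba : b = a
    · subst hba
      rw [List.count_cons_self, List.replicate_succ]
      simp [gg]
    · rw [List.count_cons_of_ne hba]
      simp [gg, hba, hbs]

lemma flatMap_gg_y {a s : ℕ} {B : List ℕ} (hcnt : B.count s = 1) (ha : a ∉ B) :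
    B.flatMap (gg a s) = [1] := by
  obtain ⟨A', B', rfl, h1, h2⟩ := count_one_split hcnt
  have haA : a ∉ A' := fun h => ha (by simp [h])
  have haB : a ∉ B' := fun h => ha (by simp [h])
  have hsa : ¬ (s = a) := fun h => ha (h ▸ (by simp))
  rw [List.flatMap_append, List.flatMap_cons, flatMap_gg_nil haA h1, flatMap_gg_nil haB h2]
  simp [gg, hsa]

lemma a_mem_left {a s : ℕ} {A B : List ℕ} (h : [a,s] <+ A ++ s :: B)
    (hsB : s ∉ B) (has : a ≠ s) : a ∈ A := by
  rw [List.sublist_append_iff] at h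
  obtain ⟨l1, l2, heq, h1, h2⟩ := h
  cases l1 with
  | nil =>
    simp only [List.nil_append] at heq
    subst heq
    rcases List.sublist_cons_iff.mp h2 with h' | ⟨r, hr, hrB⟩
    · exact absurd (h'.subset (by simp)) hsB
    · injection hr with hh _
      exact absurd hh has
  | cons a' l1' =>
    have : a' = a := by
      have := congrArg List.head? heq
      simp at this
      exact this.symm
    subst this
    exact h1.subset (by simp)

lemma t_mem_right {s t : ℕ} {A B : List ℕ} (h : [s,t] <+ A ++ s :: B)
    (hsA : s ∉ A) (hts : t ≠ s) : t ∈ B := by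
  rw [List.sublist_append_iff] at h
  obtain ⟨l1, l2, heq, h1, h2⟩ := h
  cases l1 with
  | nil =>
    simp only [List.nil_append] at heq
    subst heq
    rcases List.sublist_cons_iff.mp h2 with h' | ⟨r, hr, hrB⟩
    · exact h'.subset (by simp)
    · injection hr with _ hh
      subst hh
      exact List.singleton_sublist.mp hrB
  | cons s' l1' =>
    have : s' = s := by
      have := congrArg List.head? heq
      simp at this
      exact this.symm
    subst this
    exact absurd (h1.subset (by simp)) hsA

lemma W_yx (r : ℕ) : W ([1] ++ List.replicate r 0) = y * x ^ r := by
  rw [W_append, W_replicate]; rfl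

lemma W_xyx (p q : ℕ) : W ((List.replicate p 0 ++ [1]) ++ List.replicate q 0)
    = x ^ p * y * x ^ q := by
  rw [W_append, W_append, W_replicate, W_replicate]; rfl

lemma EXT1 (c : Con F) (hfi : IsFullyInvariant c) {u v : F} (huv : c u v) (a s : ℕ)
    (hsu : (FreeMonoid.toList u).count s = 1) (hsv : (FreeMonoid.toList v).count s = 1)
    (hau : 2 ≤ (FreeMonoid.toList u).count a)
    (hnu : ¬ ([a,s] <+ FreeMonoid.toList u)) (hv : [a,s] <+ FreeMonoid.toList v) :
    ∃ p q r : ℕ, 1 ≤ p ∧ 1 ≤ q ∧ 2 ≤ r ∧ c (x ^ p * y * x ^ q) (y * x ^ r) := by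
  have has : a ≠ s := fun h => by rw [h, hsu] at hau; omega
  have hz := hfi (zeta a s) u v huv
  obtain ⟨A, B, hu, hA, hB⟩ := count_one_split hsu
  have haA : a ∉ A := by
    intro hmem
    exact hnu (hu ▸ (List.Sublist.append (List.singleton_sublist.mpr hmem) (by simp)))
  have hrB : B.count a = (FreeMonoid.toList u).count a := by
    rw [hu, List.count_append, List.count_cons_of_ne has.symm, List.count_eq_zero.mpr haA]
    omega
  have hzu : zeta a s u = y * x ^ (B.count a) := by
    have e : u = W (FreeMonoid.toList u) := rfl
    rw [e, hu, zeta_apply, List.flatMap_append, List.flatMap_cons,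
      flatMap_gg_nil haA hA, flatMap_gg_xs hB]
    have hsa : ¬ (s = a) := fun h => has h.symm
    have : gg a s s = [1] := by simp [gg, hsa]
    rw [this]
    exact W_yx _
  obtain ⟨A', B', hv', hA', hB'⟩ := count_one_split hsv
  have haA' : a ∈ A' := a_mem_left (hv' ▸ hv) hB' has
  have hzv : zeta a s v = x ^ (A'.count a) * y * x ^ (B'.count a) := by
    have e : v = W (FreeMonoid.toList v) := rfl
    rw [e, hv', zeta_apply, List.flatMap_append, List.flatMap_cons,
      flatMap_gg_xs (a := a) hA', flatMap_gg_xs hB']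
    have hsa : ¬ (s = a) := fun h => has h.symm
    have : gg a s s = [1] := by simp [gg, hsa]
    rw [this, ← W_xyx]
    congr 1
    simp [List.append_assoc]
  rw [hzu, hzv] at hz
  set p := A'.count a with hp
  set q := B'.count a with hq
  set r := B.count a with hr
  have hp1 : 1 ≤ p := List.count_pos_iff.mpr haA'
  have hr2 : 2 ≤ r := by rw [hrB]; exact hau
  by_cases hq0 : 1 ≤ q
  · exact ⟨p, q, r, hp1, hq0, hr2, c.symm hz⟩
  · have hq' : q = 0 := by omega
    rw [hq', pow_zero, mul_one] at hz
    have hmul := c.mul (c.symm hz) (c.refl (x ^ r))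
    refine ⟨p, r, r + r, hp1, by omega, by omega, ?_⟩
    have e2 : (y * x ^ r) * x ^ r = y * x ^ (r + r) := by
      rw [mul_assoc, ← pow_add]
    rw [← e2]
    exact hmul

lemma EXT2 (c : Con F) (hfi : IsFullyInvariant c) {u v : F} (huv : c u v) (s t : ℕ)
    (hts : t ≠ s)
    (hsu : (FreeMonoid.toList u).count s = 1) (htu : (FreeMonoid.toList u).count t = 1)
    (hsv : (FreeMonoid.toList v).count s = 1) (htv : (FreeMonoid.toList v).count t = 1)
    (h1 : [s,t] <+ FreeMonoid.toList u) (h2 : [t,s] <+ FreeMonoid.toList v) :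
    ∃ p q r : ℕ, 1 ≤ p ∧ 1 ≤ q ∧ 2 ≤ r ∧ c (x ^ p * y * x ^ q) (y * x ^ r) := by
  have hz := hfi (zeta s t) u v huv
  -- compute on u : x * y
  obtain ⟨A, B, hu, hA, hB⟩ := count_one_split hsu
  have htB : t ∈ B := t_mem_right (hu ▸ h1) hA hts
  have htcntB : B.count t = 1 := by
    have := htu
    rw [hu, List.count_append, List.count_cons_of_ne hts.symm] at this
    have h1' : 1 ≤ B.count t := List.count_pos_iff.mpr htB
    omega
  have htA : t ∉ A := by
    intro hmem
    have := htu
    rw [hu, List.count_append, List.count_cons_of_ne hts.symm] at this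
    have h1' : 1 ≤ A.count t := List.count_pos_iff.mpr hmem
    omega
  have hzu : zeta s t u = x * y := by
    have e : u = W (FreeMonoid.toList u) := rfl
    rw [e, hu, zeta_apply, List.flatMap_append, List.flatMap_cons,
      flatMap_gg_nil (a := s) hA ?hh, flatMap_gg_y htcntB hB]
    case hh => exact htA
    have : gg s t s = [0] := by simp [gg]
    rw [this]
    rfl
  -- compute on v : y * x
  obtain ⟨A', B', hv', hA', hB'⟩ := count_one_split hsv
  have htA' : t ∈ A' := a_mem_left (hv' ▸ h2) hB' hts
  have htcntA' : A'.count t = 1 := by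
    have := htv
    rw [hv', List.count_append, List.count_cons_of_ne hts.symm] at this
    have h1' : 1 ≤ A'.count t := List.count_pos_iff.mpr htA'
    omega
  have htB' : t ∉ B' := by
    intro hmem
    have := htv
    rw [hv', List.count_append, List.count_cons_of_ne hts.symm] at this
    have ha' : 1 ≤ A'.count t := List.count_pos_iff.mpr htA'
    have hb' : 1 ≤ B'.count t := List.count_pos_iff.mpr hmem
    omega
  have hzv : zeta s t v = y * x := by
    have e : v = W (FreeMonoid.toList v) := rfl
    rw [e, hv', zeta_apply, List.flatMap_append, List.flatMap_cons,
      flatMap_gg_y htcntA' hA', flatMap_gg_nil (a := s) hB' htB']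
    have : gg s t s = [0] := by simp [gg]
    rw [this]
    rfl
  rw [hzu, hzv] at hz
  have hmul := c.mul hz (c.refl x)
  refine ⟨1, 1, 2, le_refl 1, le_refl 1, le_refl 2, ?_⟩
  have e1 : x ^ 1 * y * x ^ 1 = (x * y) * x := by rw [pow_one]
  have e2 : y * x ^ 2 = (y * x) * x := by rw [pow_two, ← mul_assoc]
  rw [e1, e2]
  exact hmul

/-- Completeness: equal invariants imply derivability from the identities of `E`. -/
lemma complete {d : Con F} (hg : Good d) (lu lv : List ℕ)
    (hcap : ∀ i, min (lu.count i) 2 = min (lv.count i) 2)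
    (hA : lu.filter (fun n => decide (lu.count n = 1))
        = lv.filter (fun n => decide (lu.count n = 1)))
    (hB : ∀ s a : ℕ, lu.count s = 1 → lu.count a ≠ 1 → a ∈ lu →
        ([a,s] <+ lu ↔ [a,s] <+ lv)) :
    d (W lu) (W lv) := by
  set P : ℕ → Bool := fun n => decide (lu.count n = 1) with hP
  set m : ℕ → ℕ := fun n => min (lu.count n) 2 with hm
  have hmemuv : ∀ z : ℕ, z ∈ lu ↔ z ∈ lv := by
    intro z
    rw [← List.count_pos_iff, ← List.count_pos_iff]
    have := hcap z; omega
  have g1 : d (W lu) (W (flatm m (ddp lu))) := G hg lu m (fun a _ => rfl)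
  have g2 : d (W lv) (W (flatm m (ddp lv))) :=
    G hg lv m (fun a _ => by rw [hm]; exact hcap a)
  have hsl : d (W (flatm m (ddp lu))) (W (flatm m (ddp lv))) := by
    apply SL hg m P (ddp lu) (ddp lv) (ddp_nodup lu) (ddp_nodup lv)
    · intro z
      rw [mem_ddp, mem_ddp]
      exact hmemuv z
    · have hpu : ∀ z, P z = true → lu.count z ≤ 1 := by
        intro z hz
        rw [hP] at hz
        simp only [decide_eq_true_eq] at hz
        omega
      have hpv : ∀ z, P z = true → lv.count z ≤ 1 := by
        intro z hz
        rw [hP] at hz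
        simp only [decide_eq_true_eq] at hz
        have := hcap z; omega
      rw [ddp_filter_eq lu hpu, ddp_filter_eq lv hpv]
      exact hA
    · intro s a hPs hPa
      have hs1 : lu.count s = 1 := by
        rw [hP] at hPs; simpa using hPs
      have ha1 : lu.count a ≠ 1 := by
        rw [hP] at hPa
        simp only [decide_eq_false_iff_not] at hPa
        exact hPa
      have has : a ≠ s := fun h => ha1 (h ▸ hs1)
      by_cases hmem : a ∈ lu
      · have hs1v : lv.count s = 1 := by have := hcap s; omega
        have hmemv : a ∈ lv := (hmemuv a).mp hmem
        rw [ddp_pair lu hs1 hmem has, ddp_pair lv hs1v hmemv has]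
        exact hB s a hs1 ha1 hmem
      · have h1 : a ∉ ddp lu := fun h => hmem ((mem_ddp _).mp h)
        have h2 : a ∉ ddp lv := fun h => hmem ((hmemuv a).mpr ((mem_ddp _).mp h))
        constructor
        · intro h; exact absurd h (not_pair_left h1)
        · intro h; exact absurd h (not_pair_left h2)
    · intro n hn hPn
      have hn' : n ∈ lu := (mem_ddp _).mp hn
      have k1 : 1 ≤ lu.count n := List.count_pos_iff.mpr hn'
      have k2 : lu.count n ≠ 1 := by
        rw [hP] at hPn
        simp only [decide_eq_false_iff_not] at hPn
        exact hPn
      show min (lu.count n) 2 = 2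
      omega
  exact d.trans g1 (d.trans hsl (d.symm g2))

lemma nodup_filter_simple (w w' : List ℕ) (h : ∀ z, decide (w'.count z = 1) = true → w.count z ≤ 1) :
    (w.filter (fun n => decide (w'.count n = 1))).Nodup := by
  rw [List.nodup_iff_count_le_one]
  intro z
  by_cases hz : decide (w'.count z = 1) = true
  · have hz' : (fun n => decide (w'.count n = 1)) z = true := hz
    rw [List.count_filter (p := fun n => decide (w'.count n = 1)) (a := z) hz']
    exact h z hz
  · have : z ∉ w.filter (fun n => decide (w'.count n = 1)) := by
      intro hmem
      have h2 : (fun n => decide (w'.count n = 1)) z = true :=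
        List.of_mem_filter (p := fun n => decide (w'.count n = 1)) hmem
      exact hz h2
    rw [List.count_eq_zero.mpr this]
    omega

end words

end Aux


open List in
/-- If a fully invariant congruence `c` on `F` satisfies `c ⊆ σ_C2` and
`c ⊄ σ_E`, then `c` relates `xᵖyx^q` and `yx^r` for some `p, q ≥ 1` and
`r ≥ 2`.  (In variety language: a monoid variety containing `C₂` but not `E`
satisfies `xᵖyx^q ≈ yx^r`.) -/
theorem satisfies_xpyxq (c : FICon) (h₁ : c ≤ sigmaC2) (h₂ : ¬ c ≤ sigmaE) :
    ∃ p q r : ℕ, 1 ≤ p ∧ 1 ≤ q ∧ 2 ≤ r ∧ c.1 (x ^ p * y * x ^ q) (y * x ^ r) := by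
  classical
  -- extract a witness pair in c but not in σ_E
  have hex : ∃ u v : F, c.1 u v ∧ ¬ sigmaE.1 u v := by
    by_contra h
    push_neg at h
    exact h₂ (Subtype.coe_le_coe.mp (Con.le_def.mpr (fun {u v} huv => h u v huv)))
  obtain ⟨u, v, huv, hnE⟩ := hex
  -- capped counts agree, since c ≤ σ_C2 and the capped-count congruence contains σ_C2's pairs
  have hC2 : sigmaC2 ≤ (⟨Aux.cCap, Aux.cCap_fi⟩ : FICon) := by
    apply sInf_le
    intro p hp
    simp only [Set.mem_insert_iff, Set.mem_singleton_iff] at hp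
    rcases hp with rfl | rfl
    · intro i
      have e3 : FreeMonoid.toList ((x : F)^3) = [0,0,0] := rfl
      have e2 : FreeMonoid.toList ((x : F)^2) = [0,0] := rfl
      show min ((FreeMonoid.toList ((x : F)^3)).count i) 2
          = min ((FreeMonoid.toList ((x : F)^2)).count i) 2
      rw [e3, e2]
      by_cases h : i = 0
      · subst h; rfl
      · simp [List.count_cons, Ne.symm h]
    · intro i
      have e1 : FreeMonoid.toList (x * y) = [0,1] := rfl
      have e2 : FreeMonoid.toList (y * x) = [1,0] := rfl
      show min ((FreeMonoid.toList (x * y)).count i) 2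
          = min ((FreeMonoid.toList (y * x)).count i) 2
      rw [e1, e2, (List.Perm.swap 1 0 []).count_eq i]
  have hcapF : Aux.capEq u v :=
    Con.le_def.mp (Subtype.coe_le_coe.mpr (le_trans h₁ hC2)) huv
  set lu : List ℕ := FreeMonoid.toList u with hlu
  set lv : List ℕ := FreeMonoid.toList v with hlv
  have hcap : ∀ i, min (lu.count i) 2 = min (lv.count i) 2 := hcapF
  have hmemuv : ∀ z : ℕ, z ∈ lu ↔ z ∈ lv := by
    intro z
    rw [← List.count_pos_iff, ← List.count_pos_iff]
    have := hcap z; omega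
  by_cases hB : ∀ s a : ℕ, lu.count s = 1 → lu.count a ≠ 1 → a ∈ lu →
      ([a,s] <+ lu ↔ [a,s] <+ lv)
  · by_cases hA : lu.filter (fun n => decide (lu.count n = 1))
        = lv.filter (fun n => decide (lu.count n = 1))
    · -- both invariants agree : u ≈ v already in σ_E, contradiction
      exfalso
      apply hnE
      intro e he
      obtain ⟨dd, hdd, rfl⟩ := he
      have h3 : dd.1 (x^3) (x^2) := hdd (x^3, x^2) (Set.mem_insert _ _)
      have h2' : dd.1 (x^2*y) (x*y*x) :=
        hdd (x^2*y, x*y*x) (Set.mem_insert_of_mem _ (Set.mem_insert _ _))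
      have h1' : dd.1 (x^2*y^2) (y^2*x^2) :=
        hdd (x^2*y^2, y^2*x^2) (Set.mem_insert_of_mem _ (Set.mem_insert_of_mem _ rfl))
      have hgood : Aux.Good dd.1 := ⟨dd.2, h3, h2', h1'⟩
      exact Aux.complete hgood lu lv hcap hA hB
    · -- two simple letters in different order
      set P : ℕ → Bool := fun n => decide (lu.count n = 1) with hP
      have ndu : (lu.filter P).Nodup := Aux.nodup_filter_simple lu lu
        (fun z hz => by simp only [decide_eq_true_eq] at hz; omega)
      have ndv : (lv.filter P).Nodup := Aux.nodup_filter_simple lv lu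
        (fun z hz => by
          simp only [decide_eq_true_eq] at hz
          have := hcap z; omega)
      have hmemf : ∀ z, z ∈ lu.filter P ↔ z ∈ lv.filter P := by
        intro z
        rw [List.mem_filter, List.mem_filter]
        constructor
        · rintro ⟨hm, hp⟩; exact ⟨(hmemuv z).mp hm, hp⟩
        · rintro ⟨hm, hp⟩; exact ⟨(hmemuv z).mpr hm, hp⟩
      obtain ⟨s, t, hst, h1, h2⟩ := Aux.swap_pair _ _ ndu ndv hmemf hA
      have hsf : s ∈ lu.filter P := h1.subset (by simp)
      have htf : t ∈ lu.filter P := by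
        have : t ∈ lv.filter P := h2.subset (by simp)
        exact (hmemf t).mpr this
      have hsu : lu.count s = 1 := by
        have := (List.mem_filter.mp hsf).2
        simp only [hP, decide_eq_true_eq] at this
        exact this
      have htu : lu.count t = 1 := by
        have := (List.mem_filter.mp htf).2
        simp only [hP, decide_eq_true_eq] at this
        exact this
      have hsv : lv.count s = 1 := by have := hcap s; omega
      have htv : lv.count t = 1 := by have := hcap t; omega
      have h1' : [s,t] <+ lu := h1.trans List.filter_sublist
      have h2' : [t,s] <+ lv := h2.trans List.filter_sublist
      exact Aux.EXT2 c.1 c.2 huv s t (Ne.symm hst) hsu htu hsv htv h1' h2'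
  · -- a simple letter and a multiple letter in different relative order
    push_neg at hB
    obtain ⟨s, a, hs, ha, hmem, hiff⟩ := hB
    have hsv : lv.count s = 1 := by have := hcap s; omega
    have hau2 : 2 ≤ lu.count a := by
      have : 1 ≤ lu.count a := List.count_pos_iff.mpr hmem
      omega
    have hav2 : 2 ≤ lv.count a := by have := hcap a; omega
    rcases hiff with ⟨h, h2⟩ | ⟨h, h2⟩
    · exact Aux.EXT1 c.1 c.2 (c.1.symm huv) a s hsv hs hav2 h2 h
    · exact Aux.EXT1 c.1 c.2 huv a s hs hsv hau2 h h2
end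

section
/- Let c be a fully invariant congruence on F with c ≠ ⊥ (i.e. c corresponds to a proper monoid variety) such that c is a modular element of the lattice 𝓛 of fully invariant congruences on F. Then there exist n, m ≥ 1 such that c xⁿ xⁿ⁺ᵐ. (In variety language: every proper monoid variety that is a modular element of the lattice of monoid varieties is periodic.) -/
namespace MP
open List

/-! ### List lemmas -/

lemma prefix_of_prefix_append {α : Type*} {p X T : List α} (h : p <+: X ++ T)
    (hl : p.length ≤ X.length) : p <+: X := by
  rcases List.prefix_or_prefix_of_prefix h (List.prefix_append X T) with h' | h'
  · exact h'
  · have : X = p := h'.eq_of_length (le_antisymm h'.length_le hl)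
    exact this ▸ List.prefix_rfl

lemma zfree_infix_split {z : ℕ} {f X Y : List ℕ} (hzf : z ∉ f)
    (h : f <:+: X ++ z :: Y) : f <:+: X ∨ f <:+: Y := by
  induction X with
  | nil =>
    rcases List.infix_cons_iff.1 (by simpa using h) with h' | h'
    · rcases f with _ | ⟨a, f'⟩
      · exact Or.inl (List.nil_infix)
      · rcases List.cons_prefix_cons.1 h' with ⟨rfl, -⟩
        exact absurd (List.mem_cons_self) hzf
    · exact Or.inr h'
  | cons a X ih =>
    rcases List.infix_cons_iff.1 (by simpa using h) with h' | h'
    · rcases f with _ | ⟨b, f'⟩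
      · exact Or.inl (List.nil_infix)
      · rcases List.cons_prefix_cons.1 h' with ⟨rfl, hpre⟩
        have hzf' : z ∉ f' := fun hm => hzf (List.mem_cons_of_mem _ hm)
        have hfX : f' <+: X := by
          rcases List.prefix_or_prefix_of_prefix hpre (List.prefix_append X (z :: Y)) with h2 | h2
          · exact h2
          · obtain ⟨g, rfl⟩ := h2
            have hg : g <+: z :: Y := ((List.prefix_append_right_inj X).1 hpre)
            rcases g with _ | ⟨b', g'⟩
            · simpa using List.prefix_rfl
            · rcases List.cons_prefix_cons.1 hg with ⟨rfl, -⟩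
              exact absurd (List.mem_append_right X (List.mem_cons_self)) hzf'
        exact Or.inl ((List.cons_prefix_cons.2 ⟨rfl, hfX⟩).isInfix)
    · rcases ih h' with h2 | h2
      · exact Or.inl (List.infix_cons h2)
      · exact Or.inr h2

lemma exists_last_z {z : ℕ} {U : List ℕ} (h : z ∈ U) :
    ∃ U₁ t, U = U₁ ++ z :: t ∧ z ∉ t := by
  induction U with
  | nil => cases h
  | cons a U ih =>
    by_cases hzU : z ∈ U
    · obtain ⟨U₁, t, rfl, ht⟩ := ih hzU
      exact ⟨a :: U₁, t, rfl, ht⟩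
    · rcases List.mem_cons.1 h with rfl | h'
      · exact ⟨[], U, rfl, hzU⟩
      · exact absurd h' hzU

lemma exists_first_z {z : ℕ} {U : List ℕ} (h : z ∈ U) :
    ∃ h₁ U₂, U = h₁ ++ z :: U₂ ∧ z ∉ h₁ := by
  induction U with
  | nil => cases h
  | cons a U ih =>
    by_cases haz : a = z
    · exact ⟨[], U, by rw [haz]; rfl, by simp⟩
    · have hzU : z ∈ U := by
        rcases List.mem_cons.1 h with rfl | h'
        · exact absurd rfl haz
        · exact h'
      obtain ⟨h₁, U₂, rfl, hh⟩ := ih hzU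
      exact ⟨a :: h₁, U₂, rfl, by
        intro hm; rcases List.mem_cons.1 hm with rfl | hm'
        · exact haz rfl
        · exact hh hm'⟩

lemma takeWhile_zfree {z : ℕ} (A B : List ℕ) (hA : z ∉ A) :
    (A ++ z :: B).takeWhile (fun a => a ≠ z) = A := by
  induction A with
  | nil => simp [List.takeWhile_cons]
  | cons a A ih =>
    have haz : a ≠ z := fun h => hA (h ▸ List.mem_cons_self)
    have hA' : z ∉ A := fun h => hA (List.mem_cons_of_mem _ h)
    have ih' := ih hA'
    simp only [ne_eq, decide_not] at ih' ⊢
    simp [List.takeWhile_cons, haz, ih']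

lemma last_z_unique {z : ℕ} {U₁ t U₁' t' : List ℕ} (ht : z ∉ t) (ht' : z ∉ t')
    (h : U₁ ++ z :: t = U₁' ++ z :: t') : t = t' := by
  have h1 : (U₁ ++ z :: t).reverse = (U₁' ++ z :: t').reverse := by rw [h]
  have h2 : t.reverse ++ z :: U₁.reverse = t'.reverse ++ z :: U₁'.reverse := by
    simpa [List.reverse_append] using h1
  have ht1 : z ∉ t.reverse := by simpa using ht
  have ht1' : z ∉ t'.reverse := by simpa using ht'
  have := (takeWhile_zfree _ _ ht1).symm.trans
    ((congrArg (fun l => l.takeWhile (fun a => a ≠ z)) h2).trans (takeWhile_zfree _ _ ht1'))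
  have := congrArg List.reverse this
  simpa using this

end MP
namespace MP
open List

/-! ### Flatten/replicate helpers -/

lemma flatten_replicate_succ (M : ℕ) (U : List ℕ) :
    (List.replicate (M+1) U).flatten = U ++ (List.replicate M U).flatten := by
  simp [List.replicate_succ]

lemma flatten_replicate_succ' (M : ℕ) (U : List ℕ) :
    (List.replicate (M+1) U).flatten = (List.replicate M U).flatten ++ U := by
  rw [List.replicate_succ']; simp

lemma length_flatten_replicate (M : ℕ) (U : List ℕ) :
    (List.replicate M U).flatten.length = M * U.length := by
  induction M with
  | zero => simp
  | succ M ih => rw [flatten_replicate_succ]; simp [ih]; ring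

lemma count_flatten_replicate (z : ℕ) (M : ℕ) (U : List ℕ) :
    (List.replicate M U).flatten.count z = M * U.count z := by
  induction M with
  | zero => simp
  | succ M ih => rw [flatten_replicate_succ]; simp [ih]; ring

lemma not_mem_flatten_replicate {z : ℕ} (M : ℕ) {U : List ℕ} (h : z ∉ U) :
    z ∉ (List.replicate M U).flatten := by
  induction M with
  | zero => simp
  | succ M ih => rw [flatten_replicate_succ]; simp only [List.mem_append]; tauto

/-! ### The three-region lemma -/

lemma zfree_infix_core {z : ℕ} {U h₁ U₂ U₁ t : List ℕ}
    (hU1 : U = h₁ ++ z :: U₂) (hh : z ∉ h₁)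
    (hU2 : U = U₁ ++ z :: t) (htz : z ∉ t) :
    ∀ M, 1 ≤ M → ∀ A B f : List ℕ, z ∉ f →
      f <:+: (A ++ (List.replicate M U).flatten ++ B) →
      f <:+: (A ++ h₁) ∨ f <:+: (U ++ U) ∨ f <:+: (t ++ B) := by
  intro M
  induction M with
  | zero => omega
  | succ M ih =>
    intro _ A B f hzf hf
    rcases Nat.eq_zero_or_pos M with rfl | hM
    · -- base case M+1 = 1
      have hw : A ++ (List.replicate 1 U).flatten ++ B = (A ++ h₁) ++ z :: (U₂ ++ B) := by
        simp [hU1]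
      rw [hw] at hf
      rcases zfree_infix_split hzf hf with h | h
      · exact Or.inl h
      · -- f <:+: U₂ ++ B
        by_cases hzU2 : z ∈ U₂
        · obtain ⟨C, t₂, rfl, ht₂⟩ := exists_last_z hzU2
          have hteq : t₂ = t := by
            apply last_z_unique ht₂ htz
            calc (h₁ ++ z :: C) ++ z :: t₂ = h₁ ++ z :: (C ++ z :: t₂) := by simp
            _ = U₁ ++ z :: t := by rw [← hU1, hU2]
          subst hteq
          have : (C ++ z :: t₂) ++ B = C ++ z :: (t₂ ++ B) := by simp
          rw [this] at h
          rcases zfree_infix_split hzf h with h2 | h2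
          · refine Or.inr (Or.inl (h2.trans ?_))
            exact ⟨h₁ ++ [z], (z :: t₂) ++ U, by simp [hU1]⟩
          · exact Or.inr (Or.inr h2)
        · have : U₂ = t := last_z_unique hzU2 htz (hU1.symm.trans hU2)
          exact Or.inr (Or.inr (this ▸ h))
    · -- inductive step, M ≥ 1
      have hw : A ++ (List.replicate (M+1) U).flatten ++ B
          = (A ++ h₁) ++ z :: (U₂ ++ ((List.replicate M U).flatten ++ B)) := by
        rw [flatten_replicate_succ, hU1]; simp
      rw [hw] at hf
      rcases zfree_infix_split hzf hf with h | h
      · exact Or.inl h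
      · have h' : f <:+: U₂ ++ (List.replicate M U).flatten ++ B := by
          simpa [List.append_assoc] using h
        rcases ih hM U₂ B f hzf h' with h2 | h2 | h2
        · refine Or.inr (Or.inl (h2.trans ?_))
          exact ⟨h₁ ++ [z], z :: U₂, by simp [hU1]⟩
        · exact Or.inr (Or.inl h2)
        · exact Or.inr (Or.inr h2)

/-! ### The gap-boundedness predicate -/

def Dp (z n₁ : ℕ) (w : List ℕ) : Prop := ∀ f : List ℕ, z ∉ f → f <:+: w → f.length ≤ n₁

lemma Dp.mono {z n₁ : ℕ} {w w' : List ℕ} (h : Dp z n₁ w) (hw : w' <:+: w) : Dp z n₁ w' :=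
  fun f hzf hf => h f hzf (hf.trans hw)

lemma Dp_transfer {z n₁ : ℕ} {U : List ℕ} (hz : z ∈ U) {M M' : ℕ} (hM : 2 ≤ M) (hM' : 2 ≤ M')
    (A B : List ℕ) (h : Dp z n₁ (A ++ (List.replicate M U).flatten ++ B)) :
    Dp z n₁ (A ++ (List.replicate M' U).flatten ++ B) := by
  obtain ⟨h₁, U₂, hU1, hh⟩ := exists_first_z hz
  obtain ⟨U₁, t, hU2, htz⟩ := exists_last_z hz
  intro f hzf hf
  rcases zfree_infix_core hU1 hh hU2 htz M' (by omega) A B f hzf hf with h2 | h2 | h2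
  · refine h f hzf (h2.trans ?_)
    refine ⟨[], (z :: U₂ ++ (List.replicate (M-1) U).flatten) ++ B, ?_⟩
    have : (List.replicate M U).flatten = U ++ (List.replicate (M-1) U).flatten := by
      conv_lhs => rw [show M = (M-1)+1 by omega]
      exact flatten_replicate_succ _ _
    rw [this]; simp [hU1]
  · refine h f hzf (h2.trans ?_)
    refine ⟨A, (List.replicate (M-2) U).flatten ++ B, ?_⟩
    have : (List.replicate M U).flatten = U ++ (U ++ (List.replicate (M-2) U).flatten) := by
      conv_lhs => rw [show M = (M-2)+1+1 by omega]
      rw [flatten_replicate_succ, flatten_replicate_succ]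
    simp [this]
  · refine h f hzf (h2.trans ?_)
    refine ⟨A ++ ((List.replicate (M-1) U).flatten ++ U₁ ++ [z]), [], ?_⟩
    have : (List.replicate M U).flatten = (List.replicate (M-1) U).flatten ++ U := by
      conv_lhs => rw [show M = (M-1)+1 by omega]
      exact flatten_replicate_succ' _ _
    rw [this]; simp [hU2]

end MP
namespace MP
open List

/-! ### FreeMonoid API -/

abbrev tl (w : F) : List ℕ := FreeMonoid.toList w

lemma tl_mul (u v : F) : tl (u * v) = tl u ++ tl v := rfl
lemma tl_one : tl (1 : F) = [] := rfl
lemma tl_of (a : ℕ) : tl (FreeMonoid.of a) = [a] := rfl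

lemma tl_injective : Function.Injective tl := fun _ _ h => h

lemma tl_pow (u : F) : ∀ k, tl (u ^ k) = (List.replicate k (tl u)).flatten
  | 0 => by rw [pow_zero]; simp [tl_one]
  | k+1 => by
    rw [pow_succ', tl_mul, tl_pow u k, flatten_replicate_succ]

lemma hom_eval {M : Type*} [Monoid M] (φ : F →* M) (w : F) :
    φ w = ((tl w).map (fun a => φ (FreeMonoid.of a))).prod := by
  induction w using FreeMonoid.inductionOn' with
  | one => simp [tl_one]
  | of_mul b a ih =>
    rw [map_mul, ih]
    rfl

/-! ### Content multiset -/

def ms (w : F) : Multiset ℕ := (tl w : Multiset ℕ)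

lemma ms_mul (u v : F) : ms (u * v) = ms u + ms v := by
  simp [ms, tl_mul]

lemma ms_one : ms (1 : F) = 0 := rfl

lemma ms_sub (ξ : F →* F) (w : F) :
    ms (ξ w) = (ms w).bind (fun a => ms (ξ (FreeMonoid.of a))) := by
  induction w using FreeMonoid.inductionOn' with
  | one => simp [ms_one]
  | of_mul b a ih =>
    rw [map_mul, ms_mul, ih,
      show ms (FreeMonoid.of b * a) = ms (FreeMonoid.of b) + ms a from ms_mul _ _,
      Multiset.add_bind]
    congr 1
    have : ms (FreeMonoid.of b) = {b} := rfl
    rw [this, Multiset.singleton_bind]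

lemma ms_card (w : F) : Multiset.card (ms w) = (tl w).length := by simp [ms]

lemma ms_count (a : ℕ) (w : F) : (ms w).count a = (tl w).count a := by
  simp [ms]

/-! ### The content congruence -/

def Acon : FICon :=
  ⟨{ r := fun u v => ms u = ms v,
     iseqv := ⟨fun _ => rfl, Eq.symm, Eq.trans⟩,
     mul' := fun h h' => by simp only [ms_mul]; rw [h, h'] },
   by intro ξ u v h
      show ms (ξ u) = ms (ξ v)
      rw [ms_sub, ms_sub, h]⟩

lemma Acon_apply {u v : F} : Acon.1 u v ↔ ms u = ms v := Iff.rfl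

/-! ### The truncation monoid -/

variable (N : ℕ)

def TM : Type := {l : List ℕ // l.length ≤ N}

lemma take_take_append (l r : List ℕ) : ((l.take N) ++ r).take N = (l ++ r).take N := by
  rcases le_total N l.length with h | h
  · rw [List.take_append_of_le_length (by simpa using h),
        List.take_append_of_le_length h, List.take_take, min_self]
  · rw [List.take_of_length_le h]

lemma take_append_take (l r : List ℕ) : (l ++ r.take N).take N = (l ++ r).take N := by
  rw [List.take_append, List.take_append, List.take_take]
  congr 1
  rw [min_eq_left (by omega)]

instance : Monoid (TM N) where
  mul a b := ⟨(a.1 ++ b.1).take N, by simp⟩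
  one := ⟨[], by simp⟩
  mul_assoc a b c := Subtype.ext (by
    show ((a.1 ++ b.1).take N ++ c.1).take N = (a.1 ++ (b.1 ++ c.1).take N).take N
    rw [take_take_append, take_append_take, List.append_assoc])
  one_mul a := Subtype.ext (by
    show (([] : List ℕ) ++ a.1).take N = a.1
    rw [List.nil_append, List.take_of_length_le a.2])
  mul_one a := Subtype.ext (by
    show (a.1 ++ ([] : List ℕ)).take N = a.1
    rw [List.append_nil, List.take_of_length_le a.2])

lemma TM_mul_val (a b : TM N) : (a * b).1 = (a.1 ++ b.1).take N := rfl
lemma TM_one_val : (1 : TM N).1 = [] := rfl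

lemma TM_pow_val (m : TM N) : ∀ k, (m ^ k).1 = ((List.replicate k m.1).flatten).take N
  | 0 => by rw [pow_zero]; simp [TM_one_val]
  | k+1 => by
    rw [pow_succ', TM_mul_val, TM_pow_val m k, take_append_take, flatten_replicate_succ]

lemma TM_aperiodic (m : TM N) {k : ℕ} (hN : 1 ≤ N) (hk : N ≤ k) : m ^ k = m ^ (k+1) := by
  rcases eq_or_ne m.1 [] with h | h
  · have hm : m = 1 := Subtype.ext h
    subst hm; simp
  · apply Subtype.ext
    rw [TM_pow_val, TM_pow_val, flatten_replicate_succ']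
    rw [List.take_append_of_le_length]
    rw [length_flatten_replicate]
    have : 1 ≤ m.1.length :=
      Nat.one_le_iff_ne_zero.2 (fun hl => h (List.length_eq_zero_iff.1 hl))
    calc N ≤ k := hk
    _ = k * 1 := (mul_one k).symm
    _ ≤ k * m.1.length := Nat.mul_le_mul_left k this

/-- The canonical evaluation, sending a letter to itself -/
def letterTM (a : ℕ) : TM N := ⟨[a].take N, by simp⟩

noncomputable def phiC : F →* TM N := FreeMonoid.lift (letterTM N)

lemma phiC_val (hN : 1 ≤ N) (w : F) : (phiC N w).1 = (tl w).take N := by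
  induction w using FreeMonoid.inductionOn' with
  | one => rw [map_one]; simp [TM_one_val, tl_one]
  | of_mul b a ih =>
    rw [map_mul, TM_mul_val]
    have h1 : phiC N (FreeMonoid.of b) = letterTM N b := FreeMonoid.lift_eval_of _ _
    rw [h1, ih]
    show ((([b].take N)) ++ (tl a).take N).take N = _
    rw [take_take_append, take_append_take]
    rfl

/-! ### The hom-invariance congruence Ycon -/

def Ycon : Con F :=
  { r := fun p q => ∀ φ : F →* TM N, φ p = φ q,
    iseqv := ⟨fun _ _ => rfl, fun h φ => (h φ).symm, fun h h' φ => (h φ).trans (h' φ)⟩,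
    mul' := fun h h' φ => by rw [map_mul, map_mul, h φ, h' φ] }

def YFI : FICon := ⟨Ycon N, fun ξ u v h φ => h (φ.comp ξ)⟩

end MP
namespace MP
open List

/-! ### Lattice helpers -/

lemma le_apply {e f : FICon} (h : e ≤ f) {p q : F} (hpq : e.1 p q) : f.1 p q :=
  (Subtype.coe_le_coe.2 h) hpq

lemma fic_mem {S : Set (F × F)} {p : F × F} (hp : p ∈ S) : (fic S).1 p.1 p.2 := by
  intro cc hcc
  obtain ⟨d, hd, rfl⟩ := hcc
  exact hd p hp

lemma fic_le {S : Set (F × F)} {e : FICon} (he : ∀ p ∈ S, e.1 p.1 p.2) : fic S ≤ e :=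
  sInf_le he

lemma fic_mem' {S : Set (F × F)} {p q : F} (hp : (p, q) ∈ S) : (fic S).1 p q :=
  fic_mem hp

/-! ### Congruences from translation-stable relations -/

section conOf
variable (r : F → F → Prop)

lemma eqvGen_mul_right (hr : ∀ p q s, r p q → r (p * s) (q * s)) {a b : F}
    (h : Relation.EqvGen r a b) (s : F) : Relation.EqvGen r (a * s) (b * s) := by
  induction h with
  | rel p q hpq => exact Relation.EqvGen.rel _ _ (hr p q s hpq)
  | refl p => exact Relation.EqvGen.refl _
  | symm p q _ ih => exact Relation.EqvGen.symm _ _ ih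
  | trans p q w _ _ ih1 ih2 => exact Relation.EqvGen.trans _ _ _ ih1 ih2

lemma eqvGen_mul_left (hl : ∀ p q s, r p q → r (s * p) (s * q)) {a b : F}
    (h : Relation.EqvGen r a b) (s : F) : Relation.EqvGen r (s * a) (s * b) := by
  induction h with
  | rel p q hpq => exact Relation.EqvGen.rel _ _ (hl p q s hpq)
  | refl p => exact Relation.EqvGen.refl _
  | symm p q _ ih => exact Relation.EqvGen.symm _ _ ih
  | trans p q w _ _ ih1 ih2 => exact Relation.EqvGen.trans _ _ _ ih1 ih2

def conOf (hr : ∀ p q s, r p q → r (p * s) (q * s))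
    (hl : ∀ p q s, r p q → r (s * p) (s * q)) : Con F :=
  { r := Relation.EqvGen r,
    iseqv := Relation.EqvGen.is_equivalence r,
    mul' := fun {w x y z} h h' =>
      Relation.EqvGen.trans _ _ _ (eqvGen_mul_right r hr h y) (eqvGen_mul_left r hl h' x) }

lemma conOf_fi (hr : ∀ p q s, r p q → r (p * s) (q * s))
    (hl : ∀ p q s, r p q → r (s * p) (s * q))
    (hsub : ∀ (ξ : F →* F) p q, r p q → Relation.EqvGen r (ξ p) (ξ q)) :
    IsFullyInvariant (conOf r hr hl) := by
  intro ξ u v h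
  induction h with
  | rel p q hpq => exact hsub ξ p q hpq
  | refl p => exact Relation.EqvGen.refl _
  | symm p q _ ih => exact Relation.EqvGen.symm _ _ ih
  | trans p q w _ _ ih1 ih2 => exact Relation.EqvGen.trans _ _ _ ih1 ih2

end conOf

/-! ### Pump steps -/

def pstep (J : ℕ) (p q : F) : Prop := ∃ a U b : F, p = a * U ^ J * b ∧ q = a * U ^ (J+1) * b

lemma pstep_mul_right {J : ℕ} (p q s : F) (h : pstep J p q) : pstep J (p * s) (q * s) := by
  obtain ⟨a, U, b, rfl, rfl⟩ := h
  exact ⟨a, U, b * s, by rw [mul_assoc], by rw [mul_assoc]⟩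

lemma pstep_mul_left {J : ℕ} (p q s : F) (h : pstep J p q) : pstep J (s * p) (s * q) := by
  obtain ⟨a, U, b, rfl, rfl⟩ := h
  exact ⟨s * a, U, b, by simp [mul_assoc], by simp [mul_assoc]⟩

lemma pstep_sub {J : ℕ} (ξ : F →* F) (p q : F) (h : pstep J p q) : pstep J (ξ p) (ξ q) := by
  obtain ⟨a, U, b, rfl, rfl⟩ := h
  exact ⟨ξ a, ξ U, ξ b, by simp [map_mul, map_pow], by simp [map_mul, map_pow]⟩

/-- The pump congruence -/
def EEF (J : ℕ) : FICon :=
  ⟨conOf (pstep J) pstep_mul_right pstep_mul_left,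
   conOf_fi _ pstep_mul_right pstep_mul_left
     (fun ξ p q h => Relation.EqvGen.rel _ _ (pstep_sub ξ p q h))⟩

lemma EEF_rel {J : ℕ} {p q : F} (h : pstep J p q) : (EEF J).1 p q :=
  Relation.EqvGen.rel _ _ h

/-! ### The R congruence -/

def Rbase (dv : Con F) (K : ℕ) (p q : F) : Prop :=
  (dv p q ∧ ms p = ms q) ∨ pstep K p q

lemma Rbase_mul_right (dv : Con F) (K : ℕ) (p q s : F) (h : Rbase dv K p q) :
    Rbase dv K (p * s) (q * s) := by
  rcases h with ⟨h1, h2⟩ | h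
  · exact Or.inl ⟨dv.mul h1 (dv.refl s), by rw [ms_mul, ms_mul, h2]⟩
  · exact Or.inr (pstep_mul_right p q s h)

lemma Rbase_mul_left (dv : Con F) (K : ℕ) (p q s : F) (h : Rbase dv K p q) :
    Rbase dv K (s * p) (s * q) := by
  rcases h with ⟨h1, h2⟩ | h
  · exact Or.inl ⟨dv.mul (dv.refl s) h1, by rw [ms_mul, ms_mul, h2]⟩
  · exact Or.inr (pstep_mul_left p q s h)

def RRF (dv : Con F) (hfi : IsFullyInvariant dv) (K : ℕ) : FICon :=
  ⟨conOf (Rbase dv K) (Rbase_mul_right dv K) (Rbase_mul_left dv K),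
   conOf_fi _ _ _ (fun ξ p q h => Relation.EqvGen.rel _ _ (by
      rcases h with ⟨h1, h2⟩ | h
      · exact Or.inl ⟨hfi ξ p q h1, by rw [ms_sub, ms_sub, h2]⟩
      · exact Or.inr (pstep_sub ξ p q h)))⟩

end MP
namespace MP
open List

/-! ### The words -/

def B1F (z₀ z₁ : ℕ) (w : F) : F := FreeMonoid.of z₀ * (w * FreeMonoid.of z₁)

lemma tl_B1F (z₀ z₁ : ℕ) (w : F) : tl (B1F z₀ z₁ w) = z₀ :: (tl w ++ [z₁]) := rfl

def uF (z₀ z₁ : ℕ) (w₁ w₂ : F) (J : ℕ) : F := B1F z₀ z₁ w₂ * (B1F z₀ z₁ w₁) ^ J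

lemma tl_uF (z₀ z₁ : ℕ) (w₁ w₂ : F) (J : ℕ) :
    tl (uF z₀ z₁ w₁ w₂ J) =
      (z₀ :: (tl w₂ ++ [z₁])) ++ (List.replicate J (z₀ :: (tl w₁ ++ [z₁]))).flatten := by
  rw [uF, tl_mul, tl_pow, tl_B1F, tl_B1F]

/-! ### Arithmetic facts about the words -/

section words
variable {z₀ z₁ : ℕ} {w₁ w₂ : F} {n J : ℕ}

lemma count_B1 (h : z₀ ∉ tl w₁) (hzz : z₀ ≠ z₁) :
    (z₀ :: (tl w₁ ++ [z₁])).count z₀ = 1 := by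
  simp [List.count_cons, List.count_append, List.count_eq_zero.2 h,
    List.count_singleton', hzz, hzz.symm]

lemma length_B1 (hn : (tl w₁).length = n) : (z₀ :: (tl w₁ ++ [z₁])).length = n + 2 := by
  simp [hn]

lemma count_u (h1 : z₀ ∉ tl w₁) (h2 : z₀ ∉ tl w₂) (hzz : z₀ ≠ z₁) :
    (tl (uF z₀ z₁ w₁ w₂ J)).count z₀ = J + 1 := by
  rw [tl_uF, List.count_append, count_flatten_replicate, count_B1 h1 hzz, count_B1 h2 hzz]
  ring

lemma length_u (hn1 : (tl w₁).length = n) (hn2 : (tl w₂).length = n) :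
    (tl (uF z₀ z₁ w₁ w₂ J)).length = (J + 1) * (n + 2) := by
  rw [tl_uF, List.length_append, length_flatten_replicate, length_B1 hn1, length_B1 hn2]
  ring

lemma take_u (hn1 : (tl w₁).length = n) (hn2 : (tl w₂).length = n) (hJ : 1 ≤ J) :
    (tl (uF z₀ z₁ w₁ w₂ J)).take (2 * (n + 2)) =
      (z₀ :: (tl w₂ ++ [z₁])) ++ (z₀ :: (tl w₁ ++ [z₁])) := by
  rw [tl_uF]
  have : (List.replicate J (z₀ :: (tl w₁ ++ [z₁]))).flatten =
      (z₀ :: (tl w₁ ++ [z₁])) ++ (List.replicate (J-1) (z₀ :: (tl w₁ ++ [z₁]))).flatten := by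
    conv_lhs => rw [show J = (J-1)+1 by omega]
    exact flatten_replicate_succ _ _
  rw [this, ← List.append_assoc]
  rw [List.take_left']
  simp [hn1, hn2]
  omega

lemma Dp_u (hn1 : (tl w₁).length = n) (hn2 : (tl w₂).length = n)
    (hz1 : z₀ ∉ tl w₁) (hz2 : z₀ ∉ tl w₂) (hzz : z₀ ≠ z₁) (hJ : 1 ≤ J) :
    Dp z₀ (n+1) (tl (uF z₀ z₁ w₁ w₂ J)) := by
  intro f hzf hf
  rw [tl_uF] at hf
  set l₁ := tl w₁
  set l₂ := tl w₂
  set U : List ℕ := z₀ :: (l₁ ++ [z₁]) with hU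
  have hf' : f <:+: ((z₀ :: (l₂ ++ [z₁])) ++ (List.replicate J U).flatten ++ []) := by
    simpa using hf
  have hcore := zfree_infix_core (z := z₀) (U := U) (h₁ := []) (U₂ := l₁ ++ [z₁])
    (U₁ := []) (t := l₁ ++ [z₁]) (by simp [hU]) (by simp) (by simp [hU])
    (by simp [hU, List.mem_append, hz1]
        exact fun h => hzz h)
  rcases hcore J hJ _ _ f hzf hf' with h | h | h
  · -- f <:+: z₀ :: (l₂ ++ [z₁]) ++ []
    have h2 : f <:+: ([] : List ℕ) ++ z₀ :: (l₂ ++ [z₁]) := by simpa using h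
    rcases zfree_infix_split hzf h2 with h3 | h3
    · simp [List.eq_nil_of_infix_nil h3]
    · calc f.length ≤ (l₂ ++ [z₁]).length := h3.length_le
      _ ≤ n + 1 := by simp [hn2]
  · -- f <:+: U ++ U
    have h2 : f <:+: ([] : List ℕ) ++ z₀ :: ((l₁ ++ [z₁]) ++ U) := by
      simpa [hU] using h
    rcases zfree_infix_split hzf h2 with h3 | h3
    · simp [List.eq_nil_of_infix_nil h3]
    · have h4 : f <:+: (l₁ ++ [z₁]) ++ z₀ :: (l₁ ++ [z₁]) := by simpa [hU] using h3
      rcases zfree_infix_split hzf h4 with h5 | h5 <;>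
      · calc f.length ≤ (l₁ ++ [z₁]).length := h5.length_le
        _ ≤ n + 1 := by simp [hn1]
  · have h3 : f <:+: l₁ ++ [z₁] := by simpa using h
    calc f.length ≤ (l₁ ++ [z₁]).length := h3.length_le
    _ ≤ n + 1 := by simp [hn1]

end words

end MP
namespace MP
open List

lemma tl_ctx_pow (a U b : F) (M : ℕ) :
    tl (a * U ^ M * b) = tl a ++ (List.replicate M (tl U)).flatten ++ tl b := by
  rw [tl_mul, tl_mul, tl_pow]

lemma not_Dp_of_zfree_pow {z₀ n : ℕ} {U : F} (hU : U ≠ 1) (hzU : z₀ ∉ tl U) {M : ℕ}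
    (hM : n + 2 ≤ M) (a b : F) : ¬ Dp z₀ (n+1) (tl (a * U ^ M * b)) := by
  intro hD
  have hfl : (List.replicate M (tl U)).flatten <:+: tl (a * U ^ M * b) := by
    rw [tl_ctx_pow]; exact ⟨tl a, tl b, by simp⟩
  have hz : z₀ ∉ (List.replicate M (tl U)).flatten := not_mem_flatten_replicate M hzU
  have hlen := hD _ hz hfl
  rw [length_flatten_replicate] at hlen
  have hU1 : 1 ≤ (tl U).length := by
    rcases h : tl U with _ | _
    · exact absurd (tl_injective (h.trans tl_one.symm)) hU
    · simp
  have : M * 1 ≤ M * (tl U).length := Nat.mul_le_mul_left M hU1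
  omega

lemma pstepJ_Dp_iff {z₀ n J : ℕ} (hJn : n + 2 ≤ J) {p q : F} (h : pstep J p q) :
    (Dp z₀ (n+1) (tl p) ↔ Dp z₀ (n+1) (tl q)) := by
  obtain ⟨a, U, b, rfl, rfl⟩ := h
  by_cases hU : U = 1
  · subst hU; simp
  by_cases hzU : z₀ ∈ tl U
  · rw [tl_ctx_pow, tl_ctx_pow]
    constructor
    · exact fun hD => Dp_transfer hzU (by omega) (by omega) _ _ hD
    · exact fun hD => Dp_transfer hzU (by omega) (by omega) _ _ hD
  · exact iff_of_false (not_Dp_of_zfree_pow hU hzU hJn a b)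
      (not_Dp_of_zfree_pow hU hzU (by omega) a b)

lemma EE_Dp_iff {z₀ n J : ℕ} (hJn : n + 2 ≤ J) {p q : F} (h : (EEF J).1 p q) :
    (Dp z₀ (n+1) (tl p) ↔ Dp z₀ (n+1) (tl q)) := by
  have h' : Relation.EqvGen (pstep J) p q := h
  clear h
  induction h' with
  | rel p q hpq => exact pstepJ_Dp_iff hJn hpq
  | refl p => exact Iff.rfl
  | symm _ _ _ ih => exact ih.symm
  | trans _ _ _ _ _ ih1 ih2 => exact ih1.trans ih2

/-! ### The Good predicate -/

def Good (N n J z₀ : ℕ) (u w : F) : Prop :=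
  ms w = ms u ∧ (∀ φ : F →* TM N, φ w = φ u) ∧ Dp z₀ (n+1) (tl w)

section rigid
variable {z₀ z₁ n J K N : ℕ} {w₁ w₂ : F}

lemma rigid (hJ : J = 2*n+4) (hK : K = J+1) (hN : N = 2*(n+2))
    (hn1 : (tl w₁).length = n) (hn2 : (tl w₂).length = n)
    (hz01 : z₀ ∉ tl w₁) (hz02 : z₀ ∉ tl w₂) (hzz : z₀ ≠ z₁) (hne : w₁ ≠ w₂)
    {a U b : F} (hzU : z₀ ∈ tl U)
    (hG : Good N n J z₀ (uF z₀ z₁ w₁ w₂ J) (a * U ^ K * b)) : False := by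
  obtain ⟨hms, hY, hDp⟩ := hG
  -- counts
  have hcnt : (tl (a * U ^ K * b)).count z₀ = J + 1 := by
    rw [← ms_count, hms, ms_count]; exact count_u hz01 hz02 hzz
  rw [tl_ctx_pow, List.count_append, List.count_append, count_flatten_replicate] at hcnt
  have hcU : 1 ≤ (tl U).count z₀ := List.count_pos_iff.2 hzU
  have hcU1 : (tl U).count z₀ = 1 := by
    by_contra hx
    have h2 : K * 2 ≤ K * ((tl U).count z₀) := Nat.mul_le_mul_left K (by omega)
    omega
  rw [hcU1, Nat.mul_one] at hcnt
  have hza : z₀ ∉ tl a := List.count_eq_zero.1 (by omega)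
  have hzb : z₀ ∉ tl b := List.count_eq_zero.1 (by omega)
  -- take N equality
  have htake : (tl (a * U ^ K * b)).take N = (tl (uF z₀ z₁ w₁ w₂ J)).take N := by
    have h0 := congrArg Subtype.val (hY (phiC N))
    rwa [phiC_val N (by omega), phiC_val N (by omega)] at h0
  have htu : (tl (uF z₀ z₁ w₁ w₂ J)).take N =
      (z₀ :: (tl w₂ ++ [z₁])) ++ (z₀ :: (tl w₁ ++ [z₁])) := by
    rw [hN]; exact take_u hn1 hn2 (by omega)
  -- a = 1
  have ha : tl a = [] := by
    rcases h : tl a with _ | ⟨a0, al⟩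
    · rfl
    · exfalso
      have h1 : tl (a * U ^ K * b) =
          a0 :: (al ++ ((List.replicate K (tl U)).flatten ++ tl b)) := by
        rw [tl_ctx_pow, h]; simp
      have h2 := htake
      rw [h1, htu, show N = (N-1)+1 by omega, List.take_succ_cons,
        show (z₀ :: (tl w₂ ++ [z₁])) ++ (z₀ :: (tl w₁ ++ [z₁])) =
          z₀ :: ((tl w₂ ++ [z₁]) ++ (z₀ :: (tl w₁ ++ [z₁]))) from by simp] at h2
      have ha0 : a0 = z₀ := by injection h2 with h7 h8
      exact hza (by rw [h, ha0]; exact List.mem_cons_self)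
  -- lengths
  have hlen : (tl (a * U ^ K * b)).length = (J+1) * (n+2) := by
    have hc := congrArg Multiset.card hms
    rw [ms_card, ms_card] at hc
    rw [hc, length_u hn1 hn2]
  rw [tl_ctx_pow, ha] at hlen
  simp only [List.nil_append, List.length_append, length_flatten_replicate] at hlen
  -- b is a z-free infix
  have hbinf : tl b <:+: tl (a * U ^ K * b) := by
    rw [tl_ctx_pow]; exact ⟨tl a ++ (List.replicate K (tl U)).flatten, [], by simp⟩
  have hlb : (tl b).length ≤ n + 1 := hDp _ hzb hbinf
  -- solve for |U| and b
  obtain ⟨m, hmdef⟩ : ∃ m, (tl U).length = m := ⟨_, rfl⟩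
  obtain ⟨lb, hlbdef⟩ : ∃ lb, (tl b).length = lb := ⟨_, rfl⟩
  rw [hmdef, hlbdef] at hlen
  rw [hlbdef] at hlb
  have key : K * m + lb = K * (n+2) := by
    conv_rhs => rw [hK]
    exact hlen
  have hmU : m = n + 2 ∧ lb = 0 := by
    rcases lt_trichotomy m (n+2) with hlt | heq | hgt
    · exfalso
      have h1 : K * m + K ≤ K * (n+2) := by
        calc K * m + K = K * (m+1) := by ring
        _ ≤ K * (n+2) := Nat.mul_le_mul_left K (by omega)
      have h2 : K * m + K ≤ K * m + lb := key ▸ h1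
      have h3 : K ≤ lb := Nat.le_of_add_le_add_left h2
      omega
    · refine ⟨heq, ?_⟩
      have h4 : K * (n+2) + lb = K * (n+2) + 0 := by
        rw [heq] at key; omega
      exact Nat.add_left_cancel h4
    · exfalso
      have h1 : K * (n+2) + K ≤ K * m := by
        calc K * (n+2) + K = K * (n+3) := by ring
        _ ≤ K * m := Nat.mul_le_mul_left K (by omega)
      have h2 : K * m ≤ K * (n+2) + 0 := by
        calc K * m ≤ K * m + lb := Nat.le_add_right _ _
        _ = K * (n+2) := key
        _ = K * (n+2) + 0 := by omega
      have h3 : K ≤ 0 := Nat.le_of_add_le_add_left (le_trans h1 h2)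
      omega
  have hb : tl b = [] := List.length_eq_zero_iff.1 (by omega)
  -- take N of the left side
  have hUU : (tl (a * U ^ K * b)).take N = tl U ++ tl U := by
    rw [tl_ctx_pow, ha, hb]
    simp only [List.nil_append, List.append_nil]
    have hsplit : (List.replicate K (tl U)).flatten =
        (tl U ++ tl U) ++ (List.replicate (K-2) (tl U)).flatten := by
      conv_lhs => rw [show K = (K-2)+1+1 by omega]
      rw [flatten_replicate_succ, flatten_replicate_succ, List.append_assoc]
    rw [hsplit, List.take_left']
    rw [List.length_append, hmdef, hmU.1]; omega
  rw [htake, htu] at hUU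
  have hlenB : (z₀ :: (tl w₂ ++ [z₁])).length = (tl U).length := by
    rw [hmdef, hmU.1]; simp [hn2]
  obtain ⟨hU2, hU1⟩ := List.append_inj hUU.symm hlenB.symm
  apply hne
  apply tl_injective
  have h5 : z₀ :: (tl w₁ ++ [z₁]) = z₀ :: (tl w₂ ++ [z₁]) := hU1.symm.trans hU2
  have h6 : tl w₁ ++ [z₁] = tl w₂ ++ [z₁] := by
    injection h5
  exact List.append_cancel_right h6

end rigid

lemma lift_indicator_pow (a : ℕ) (w : F) :
    (FreeMonoid.lift (fun b => if b = a then x else 1)) w = x ^ ((tl w).count a) := by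
  induction w using FreeMonoid.inductionOn' with
  | one => rw [map_one]; simp [tl_one]
  | of_mul b w ih =>
    rw [map_mul, ih, FreeMonoid.lift_eval_of]
    have htl : tl (FreeMonoid.of b * w) = b :: tl w := rfl
    rw [htl]
    by_cases hb : b = a
    · subst hb
      rw [if_pos rfl, List.count_cons_self, pow_succ']
    · rw [if_neg hb, one_mul, List.count_cons_of_ne hb]

lemma le_foldr_max : ∀ (L : List ℕ) (a : ℕ), a ∈ L → a ≤ L.foldr max 0 := by
  intro L
  induction L with
  | nil => intro a ha; cases ha
  | cons b L ih =>
    intro a ha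
    rcases List.mem_cons.1 ha with rfl | ha'
    · exact le_max_left _ _
    · exact le_trans (ih a ha') (le_max_right _ _)

end MP
namespace MP
open List

section steps
variable {z₀ z₁ n J K N : ℕ} {w₁ w₂ : F}

lemma pstepK_Good_iff (hJ : J = 2*n+4) (hK : K = J+1) (hN : N = 2*(n+2))
    (hn1 : (tl w₁).length = n) (hn2 : (tl w₂).length = n)
    (hz01 : z₀ ∉ tl w₁) (hz02 : z₀ ∉ tl w₂) (hzz : z₀ ≠ z₁) (hne : w₁ ≠ w₂)
    {p q : F} (h : pstep K p q) :
    (Good N n J z₀ (uF z₀ z₁ w₁ w₂ J) p ↔ Good N n J z₀ (uF z₀ z₁ w₁ w₂ J) q) := by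
  obtain ⟨a, U, b, rfl, rfl⟩ := h
  by_cases hU : U = 1
  · subst hU; simp
  by_cases hzU : z₀ ∈ tl U
  · refine iff_of_false (fun hG => rigid hJ hK hN hn1 hn2 hz01 hz02 hzz hne hzU hG) ?_
    rintro ⟨hms', -, -⟩
    have hcnt : (tl (a * U ^ (K+1) * b)).count z₀ = J + 1 := by
      rw [← ms_count, hms', ms_count]; exact count_u hz01 hz02 hzz
    rw [tl_ctx_pow, List.count_append, List.count_append, count_flatten_replicate] at hcnt
    have hcU : 1 ≤ (tl U).count z₀ := List.count_pos_iff.2 hzU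
    have h2 : (K+1) * 1 ≤ (K+1) * ((tl U).count z₀) := Nat.mul_le_mul_left _ hcU
    obtain ⟨X, hX⟩ : ∃ X, (K+1) * ((tl U).count z₀) = X := ⟨_, rfl⟩
    rw [hX] at hcnt h2
    omega
  · exact iff_of_false
      (fun hG => not_Dp_of_zfree_pow hU hzU (by omega) a b hG.2.2)
      (fun hG => not_Dp_of_zfree_pow hU hzU (by omega) a b hG.2.2)

lemma base_Good_iff {dv : Con F}
    (hY : ∀ p q : F, dv p q → ∀ φ : F →* TM N, φ p = φ q)
    (hE : ∀ p q : F, dv p q → (EEF J).1 p q)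
    (hJn : n + 2 ≤ J) {u : F}
    {p q : F} (hdv : dv p q) (hmspq : ms p = ms q) :
    (Good N n J z₀ u p ↔ Good N n J z₀ u q) := by
  unfold Good
  apply and_congr
  · constructor
    · intro h; rw [← hmspq]; exact h
    · intro h; rw [hmspq]; exact h
  apply and_congr
  · exact forall_congr' fun φ => by rw [hY p q hdv φ]
  · exact EE_Dp_iff hJn (hE p q hdv)

end steps
end MP

open MP List

/-- Every proper monoid variety that is a modular element of the lattice of
monoid varieties is periodic: if a fully invariant congruence `c ≠ ⊥` on `F`
is a modular element of the lattice of fully invariant congruences, then `c`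
relates `xⁿ` and `xⁿ⁺ᵐ` for some `n, m ≥ 1`. -/
theorem periodic_of_modular (c : FICon) (hc : c ≠ ⊥)
    (hmod : ∀ b d : FICon, b ≤ d → (c ⊓ d) ⊔ b = (c ⊔ b) ⊓ d) :
    ∃ n m : ℕ, 1 ≤ n ∧ 1 ≤ m ∧ c.1 (x ^ n) (x ^ (n + m)) := by
  by_contra hng
  push_neg at hng
  -- Step 1: c only relates words with the same content
  have hbal : ∀ p q : F, c.1 p q → ms p = ms q := by
    intro p q hpq
    by_contra hnr
    have hex : ∃ a, (ms p).count a ≠ (ms q).count a := by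
      by_contra hall; push_neg at hall; exact hnr (Multiset.ext.2 hall)
    obtain ⟨a, ha⟩ := hex
    rw [ms_count, ms_count] at ha
    have h2 := c.2 (FreeMonoid.lift (fun b => if b = a then x else 1)) p q hpq
    rw [lift_indicator_pow, lift_indicator_pow] at h2
    have main : ∀ k l : ℕ, k < l → c.1 (x^k) (x^l) → False := by
      intro k l hkl hc'
      rcases Nat.eq_zero_or_pos k with rfl | hk
      · have h3 : c.1 (x * x^0) (x * x^l) := c.1.mul (c.1.refl x) hc'
        rw [pow_zero, mul_one, ← pow_succ'] at h3
        exact hng 1 l le_rfl (by omega) (by rw [show 1 + l = l + 1 by omega]; simpa using h3)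
      · exact hng k (l - k) hk (by omega)
          (by rw [show k + (l-k) = l by omega]; exact hc')
    rcases lt_or_gt_of_ne ha with h | h
    · exact main _ _ h h2
    · exact main _ _ h (c.1.symm h2)
  -- Step 2: a nontrivial pair
  obtain ⟨w₁, w₂, hc12, hne⟩ : ∃ w₁ w₂ : F, c.1 w₁ w₂ ∧ w₁ ≠ w₂ := by
    by_contra hall; push_neg at hall
    refine hc (le_antisymm ?_ bot_le)
    intro p q hpq
    rw [hall p q hpq]
    exact (⊥ : FICon).1.refl q
  have hms12 : ms w₁ = ms w₂ := hbal _ _ hc12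
  obtain ⟨n, hn1⟩ : ∃ n, (tl w₁).length = n := ⟨_, rfl⟩
  have hn2 : (tl w₂).length = n := by
    have := congrArg Multiset.card hms12
    rw [ms_card, ms_card] at this
    omega
  have hnpos : 1 ≤ n := by
    rcases Nat.eq_zero_or_pos n with rfl | h
    · exact absurd (tl_injective ((List.length_eq_zero_iff.1 hn1).trans
        (List.length_eq_zero_iff.1 hn2).symm)) hne
    · exact h
  -- Step 3: fresh letters
  obtain ⟨z₀, hz₀⟩ : ∃ z₀, z₀ = (tl w₁ ++ tl w₂).foldr max 0 + 1 := ⟨_, rfl⟩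
  obtain ⟨z₁, hz₁⟩ : ∃ z₁, z₁ = z₀ + 1 := ⟨_, rfl⟩
  have hmemle : ∀ a ∈ tl w₁ ++ tl w₂, a ≤ (tl w₁ ++ tl w₂).foldr max 0 :=
    le_foldr_max _
  have hz01 : z₀ ∉ tl w₁ := fun h =>
    by have := hmemle z₀ (List.mem_append_left _ h); omega
  have hz02 : z₀ ∉ tl w₂ := fun h =>
    by have := hmemle z₀ (List.mem_append_right _ h); omega
  have hzz : z₀ ≠ z₁ := by omega
  -- Step 4: the parameters and words
  obtain ⟨J, hJdef⟩ : ∃ J, J = 2*n+4 := ⟨_, rfl⟩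
  obtain ⟨K, hKdef⟩ : ∃ K, K = J+1 := ⟨_, rfl⟩
  obtain ⟨N, hNdef⟩ : ∃ N, N = 2*(n+2) := ⟨_, rfl⟩
  set B1 : F := B1F z₀ z₁ w₁ with hB1
  set B2 : F := B1F z₀ z₁ w₂ with hB2
  set u : F := uF z₀ z₁ w₁ w₂ J with hu
  set v : F := uF z₀ z₁ w₁ w₂ (J+1) with hv
  have huprod : u = B2 * B1 ^ J := rfl
  have hvprod : v = B2 * B1 ^ (J+1) := rfl
  -- the congruences
  set dd : FICon := fic {(x^K, x^(K+1)), (u, v)} with hdd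
  set PK : FICon := fic {(x^K, x^(K+1))} with hPK
  set bb : FICon := (Acon ⊓ dd) ⊔ PK with hbb
  have hgen1 : dd.1 (x^K) (x^(K+1)) := fic_mem' (Set.mem_insert _ _)
  have hgen2 : dd.1 u v := fic_mem' (Set.mem_insert_of_mem _ rfl)
  have hPKgen : PK.1 (x^K) (x^(K+1)) := fic_mem' rfl
  have hbd : bb ≤ dd := by
    apply sup_le inf_le_right
    apply fic_le
    rintro p hp
    rw [hp]
    exact hgen1
  -- Step 5: the chain
  have hcB : c.1 B2 B1 := by
    rw [hB1, hB2, B1F, B1F]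
    exact c.1.mul (c.1.refl _) (c.1.mul (c.1.symm hc12) (c.1.refl _))
  have step1 : c.1 u (B1 ^ K) := by
    rw [huprod, hKdef, pow_succ']
    exact c.1.mul hcB (c.1.refl _)
  have step2 : PK.1 (B1^K) (B1^(K+1)) := by
    have h0 := PK.2 (FreeMonoid.lift (fun _ => B1)) _ _ hPKgen
    have hx : FreeMonoid.lift (fun _ : ℕ => B1) x = B1 := FreeMonoid.lift_eval_of _ _
    have e1 : (FreeMonoid.lift (fun _ : ℕ => B1)) (x^K) = B1^K := by rw [map_pow, hx]
    have e2 : (FreeMonoid.lift (fun _ : ℕ => B1)) (x^(K+1)) = B1^(K+1) := by rw [map_pow, hx]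
    rwa [e1, e2] at h0
  have step3 : c.1 (B1^(K+1)) v := by
    rw [hvprod, hKdef, show J+1+1 = J+2 by omega, show B1 ^ (J+2) = B1 * B1^(J+1) by rw [pow_succ']]
    exact c.1.mul (c.1.symm hcB) (c.1.refl _)
  have hchain : (c ⊔ bb).1 u v := by
    have hcle : c ≤ c ⊔ bb := le_sup_left
    have hPKle : PK ≤ c ⊔ bb := le_trans le_sup_right le_sup_right
    exact (c ⊔ bb).1.trans (le_apply hcle step1)
      ((c ⊔ bb).1.trans (le_apply hPKle step2) (le_apply hcle step3))
  -- Step 6: apply modularity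
  have h1 : ((c ⊔ bb) ⊓ dd).1 u v := by
    have hfic : fic {(u, v)} ≤ (c ⊔ bb) ⊓ dd := by
      apply le_inf
      · apply fic_le; rintro p hp; rw [hp]; exact hchain
      · apply fic_le; rintro p hp; rw [hp]; exact hgen2
    exact le_apply hfic (fic_mem' rfl)
  have h2 : ((c ⊓ dd) ⊔ bb).1 u v := by
    rw [hmod bb dd hbd]; exact h1
  -- Step 7: dd is below the invariant congruences
  have hddY : dd ≤ YFI N := by
    apply fic_le
    rintro p hp
    rcases hp with hp | hp <;> rw [hp]
    · intro φ
      rw [map_pow, map_pow]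
      exact TM_aperiodic N (φ x) (by omega) (by omega)
    · intro φ
      rw [huprod, hvprod, map_mul, map_mul, map_pow, map_pow]
      rw [TM_aperiodic N (φ B1) (by omega) (by omega)]
  have hddE : dd ≤ EEF J := by
    apply fic_le
    rintro p hp
    rcases hp with hp | hp <;> rw [hp]
    · exact EEF_rel ⟨x, x, 1, by rw [mul_one, ← pow_succ', hKdef], by
        rw [mul_one, ← pow_succ', hKdef]⟩
    · exact EEF_rel ⟨B2, B1, 1, by rw [mul_one, huprod], by rw [mul_one, hvprod]⟩
  have hYdd : ∀ p q : F, dd.1 p q → ∀ φ : F →* TM N, φ p = φ q :=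
    fun p q h => le_apply hddY h
  have hEdd : ∀ p q : F, dd.1 p q → (EEF J).1 p q :=
    fun p q h => le_apply hddE h
  -- Step 8: the R congruence bound
  set RC : FICon := RRF dd.1 dd.2 K with hRC
  have hRb : ((c ⊓ dd) ⊔ bb) ≤ RC := by
    apply sup_le
    · intro p q hpq
      have hcp : c.1 p q := le_apply inf_le_left hpq
      have hdp : dd.1 p q := le_apply inf_le_right hpq
      exact Relation.EqvGen.rel _ _ (Or.inl ⟨hdp, hbal _ _ hcp⟩)
    · apply sup_le
      · intro p q hpq
        have hap : Acon.1 p q := le_apply inf_le_left hpq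
        have hdp : dd.1 p q := le_apply inf_le_right hpq
        exact Relation.EqvGen.rel _ _ (Or.inl ⟨hdp, hap⟩)
      · apply fic_le
        rintro p hp
        rw [hp]
        exact Relation.EqvGen.rel _ _ (Or.inr ⟨1, x, 1, by simp, by simp⟩)
  have hRuv : RC.1 u v := le_apply hRb h2
  -- Step 9: the invariant
  have hGu : Good N n J z₀ u u := by
    refine ⟨rfl, fun φ => rfl, ?_⟩
    rw [hu]
    exact Dp_u hn1 hn2 hz01 hz02 hzz (by omega)
  have hGv : ¬ Good N n J z₀ u v := by
    rintro ⟨hms', -, -⟩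
    have hcv : (tl v).count z₀ = (J+1) + 1 := by rw [hv]; exact count_u hz01 hz02 hzz
    have hcu : (tl u).count z₀ = J + 1 := by rw [hu]; exact count_u hz01 hz02 hzz
    have := congrArg (Multiset.count z₀) hms'
    rw [ms_count, ms_count, hcv, hcu] at this
    omega
  have hinv : ∀ p q : F, RC.1 p q → (Good N n J z₀ u p ↔ Good N n J z₀ u q) := by
    intro p q h
    have h' : Relation.EqvGen (Rbase dd.1 K) p q := h
    clear h
    induction h' with
    | rel p q hpq =>
      rcases hpq with ⟨hdv, hmspq⟩ | hps
      · exact base_Good_iff hYdd hEdd (by omega) hdv hmspq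
      · rw [hu]
        exact pstepK_Good_iff hJdef hKdef hNdef hn1 hn2 hz01 hz02 hzz hne hps
    | refl p => exact Iff.rfl
    | symm _ _ _ ih => exact ih.symm
    | trans _ _ _ _ _ ih1 ih2 => exact ih1.trans ih2
  exact hGv ((hinv u v hRuv).1 hGu)
end

section
/- For every n ≥ 1, the set A = {w ∈ F : every letter occurring in w is x or y, the number of occurrences of x in w is n+1, and the number of occurrences of y in w is n} is an anti-chain under the quasi-order ⪯: for all u, v ∈ A, if u ⪯ v then u = v. -/
/-- The quasi-order `⪯`: `u ⪯ v` iff `v = a * ξ u * b` for some words `a, b`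
and some endomorphism `ξ` of `F` sending every generator to a nonempty word
(i.e. an endomorphism of the free semigroup). -/
def Prec (u v : F) : Prop :=
  ∃ (a b : F) (ξ : F →* F), (∀ k : ℕ, ξ (FreeMonoid.of k) ≠ 1) ∧ v = a * ξ u * b

/- Auxiliary lemmas -/

lemma hom_toList (ξ : F →* F) (l : List ℕ) :
    FreeMonoid.toList (ξ (FreeMonoid.ofList l))
      = (l.map (fun c => FreeMonoid.toList (ξ (FreeMonoid.of c)))).flatten := by
  induction l with
  | nil => simp [show FreeMonoid.ofList ([] : List ℕ) = 1 from rfl]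
  | cons c t ih =>
      have : FreeMonoid.ofList (c :: t) = FreeMonoid.of c * FreeMonoid.ofList t := rfl
      simp [this, map_mul, FreeMonoid.toList_mul, ih]

lemma length_le_sum (g : ℕ → ℕ) : ∀ (l : List ℕ), (∀ c ∈ l, 1 ≤ g c) →
    l.length ≤ (l.map g).sum := by
  intro l
  induction l with
  | nil => simp
  | cons c t ih =>
      intro h
      have h1 := h c (by simp)
      have h2 := ih (fun c hc => h c (by simp [hc]))
      simp only [List.map_cons, List.sum_cons, List.length_cons]
      omega

lemma sum_eq_length (g : ℕ → ℕ) : ∀ (l : List ℕ), (∀ c ∈ l, 1 ≤ g c) →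
    (l.map g).sum = l.length → ∀ c ∈ l, g c = 1 := by
  intro l
  induction l with
  | nil => simp
  | cons c t ih =>
      intro h1 h2 d hd
      have hgc := h1 c (by simp)
      have ht1 : ∀ e ∈ t, 1 ≤ g e := fun e he => h1 e (by simp [he])
      have hts := length_le_sum g t ht1
      simp only [List.map_cons, List.sum_cons, List.length_cons] at h2
      have hts' : (t.map g).sum = t.length := by omega
      rcases List.mem_cons.mp hd with rfl | hd'
      · omega
      · exact ih ht1 hts' d hd'

lemma join_singletons (f : ℕ → List ℕ) (g : ℕ → ℕ) : ∀ (l : List ℕ),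
    (∀ c ∈ l, f c = [g c]) → (l.map f).flatten = l.map g := by
  intro l
  induction l with
  | nil => simp
  | cons c t ih =>
      intro h
      simp only [List.map_cons, List.flatten_cons, h c (by simp),
        ih (fun e he => h e (by simp [he]))]
      rfl

lemma length_01 : ∀ (l : List ℕ), (∀ c ∈ l, c = 0 ∨ c = 1) →
    l.length = l.count 0 + l.count 1 := by
  intro l
  induction l with
  | nil => simp
  | cons c t ih =>
      intro h
      have := ih (fun e he => h e (by simp [he]))
      rcases h c (by simp) with rfl | rfl <;>
        simp [List.count_cons, this] <;> omega

lemma count_map_01 (g : ℕ → ℕ) (e : ℕ) : ∀ (l : List ℕ), (∀ c ∈ l, c = 0 ∨ c = 1) →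
    (l.map g).count e = (if g 0 = e then l.count 0 else 0)
      + (if g 1 = e then l.count 1 else 0) := by
  intro l
  induction l with
  | nil => simp
  | cons c t ih =>
      intro h
      have iht := ih (fun d hd => h d (by simp [hd]))
      rcases h c (by simp) with rfl | rfl <;>
        · simp only [List.map_cons, List.count_cons, iht, beq_iff_eq]
          split_ifs <;> simp_all <;> omega

/-- For every `n ≥ 1`, the set of words over the letters `x, y` containing
exactly `n + 1` occurrences of `x` and exactly `n` occurrences of `y` is an
anti-chain under the quasi-order `⪯`. -/
theorem antichain_occ (n : ℕ) (hn : 1 ≤ n) (u v : F)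
    (hu : (∀ a ∈ FreeMonoid.toList u, a = 0 ∨ a = 1) ∧
      (FreeMonoid.toList u).count 0 = n + 1 ∧ (FreeMonoid.toList u).count 1 = n)
    (hv : (∀ a ∈ FreeMonoid.toList v, a = 0 ∨ a = 1) ∧
      (FreeMonoid.toList v).count 0 = n + 1 ∧ (FreeMonoid.toList v).count 1 = n)
    (huv : Prec u v) : u = v := by
  obtain ⟨a, b, ξ, hξ, hveq⟩ := huv
  set l : List ℕ := FreeMonoid.toList u with hl
  set f : ℕ → List ℕ := fun c => FreeMonoid.toList (ξ (FreeMonoid.of c)) with hf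
  -- each f c is nonempty
  have hfne : ∀ c, 1 ≤ (f c).length := by
    intro c
    have := hξ c
    rcases h : f c with _ | ⟨d, t⟩
    · exfalso; apply this
      have := congrArg FreeMonoid.ofList h
      rw [FreeMonoid.ofList_toList] at this
      simpa using this
    · simp
  -- decompose toList v
  have hu' : u = FreeMonoid.ofList l := by rw [hl, FreeMonoid.ofList_toList]
  have hξu : FreeMonoid.toList (ξ u) = (l.map f).flatten := by
    rw [hu', hom_toList]
  have hvlist : FreeMonoid.toList v
      = FreeMonoid.toList a ++ (l.map f).flatten ++ FreeMonoid.toList b := by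
    rw [hveq, FreeMonoid.toList_mul, FreeMonoid.toList_mul, hξu]
  -- lengths
  have hlu : l.length = 2 * n + 1 := by
    rw [length_01 l hu.1, hu.2.1, hu.2.2]; omega
  have hlv : (FreeMonoid.toList v).length = 2 * n + 1 := by
    rw [length_01 _ hv.1, hv.2.1, hv.2.2]; omega
  have hjoinlen : ((l.map f).flatten).length = (l.map (fun c => (f c).length)).sum := by
    simp [List.length_flatten, Function.comp_def]
  have hge : l.length ≤ (l.map (fun c => (f c).length)).sum :=
    length_le_sum _ l (fun c _ => hfne c)
  have hlenv : (FreeMonoid.toList v).length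
      = (FreeMonoid.toList a).length + ((l.map f).flatten).length
        + (FreeMonoid.toList b).length := by
    rw [hvlist]; simp only [List.length_append]
  have ha0 : (FreeMonoid.toList a).length = 0 := by omega
  have hb0 : (FreeMonoid.toList b).length = 0 := by omega
  have hsum : (l.map (fun c => (f c).length)).sum = l.length := by omega
  -- each letter maps to a single letter
  have hone : ∀ c ∈ l, (f c).length = 1 :=
    sum_eq_length _ l (fun c _ => hfne c) hsum
  set g : ℕ → ℕ := fun c => (f c).headI with hg
  have hsing : ∀ c ∈ l, f c = [g c] := by
    intro c hc
    obtain ⟨d, hd⟩ := List.length_eq_one_iff.mp (hone c hc)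
    rw [hd]; simp [hg, hd]
  have hjoin : (l.map f).flatten = l.map g := join_singletons f g l hsing
  have hvmap : FreeMonoid.toList v = l.map g := by
    rw [hvlist, List.length_eq_zero_iff.mp ha0, List.length_eq_zero_iff.mp hb0, hjoin]
    simp
  -- counts determine g on {0, 1}
  have hc0 : (l.map g).count 0 = n + 1 := by rw [← hvmap]; exact hv.2.1
  have hc1 : (l.map g).count 1 = n := by rw [← hvmap]; exact hv.2.2
  rw [count_map_01 g 0 l hu.1, hu.2.1, hu.2.2] at hc0
  rw [count_map_01 g 1 l hu.1, hu.2.1, hu.2.2] at hc1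
  have hg0 : g 0 = 0 := by
    by_contra h
    simp [h] at hc0
    split_ifs at hc0 <;> omega
  have hg1 : g 1 = 1 := by
    by_contra h
    rw [if_neg (by simp [hg0]), if_neg h] at hc1
    omega
  -- conclude
  have : l.map g = l := by
    have : ∀ c ∈ l, g c = c := by
      intro c hc
      rcases hu.1 c hc with rfl | rfl
      · exact hg0
      · exact hg1
    calc l.map g = l.map id := List.map_congr_left this
      _ = l := List.map_id l
  have htv : FreeMonoid.toList v = FreeMonoid.toList u := by rw [hvmap, this, hl]
  have := congrArg FreeMonoid.ofList htv
  rwa [FreeMonoid.ofList_toList, FreeMonoid.ofList_toList, eq_comm] at this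
end
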